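/- arXiv:1307.6708 — 2 statements merged into one kernel-verified Lean document; each statement's English description precedes it below -/
import Mathlib

section
/- Let H be a finite simple graph with no isolated vertices. The edge polytope P(H) is a simplex if and only if every cycle in H is odd and every connected component of H contains at most one cycle. -/
open Set

/-- The set of generating points `e i + e j` for the edges `{i, j}` of a graph on
`Fin n`; these are exactly the vertices of the edge polytope. -/
def edgeVectors {n : ℕ} (H : SimpleGraph (Fin n)) : Set (Fin n → ℝ) :=
  {x | ∃ i j : Fin n, H.Adj i j ∧ x = Pi.single i 1 + Pi.single j 1}

/-- Every cycle of `H` is odd, and every connected component of `H` contains at most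
one cycle (any two cycles lying in the same component have the same edge set). -/
def CactusLike {V : Type*} (H : SimpleGraph V) : Prop :=
  (∀ (v : V) (c : H.Walk v v), c.IsCycle → Odd c.length) ∧
  (∀ (u v : V) (c : H.Walk u u) (d : H.Walk v v), c.IsCycle → d.IsCycle →
    H.Reachable u v → ∀ e : Sym2 V, e ∈ c.edges ↔ e ∈ d.edges)

namespace EdgePolytopeAux

open SimpleGraph Finset

variable {n : ℕ}

/-- The incidence vector of an edge. -/
def vecE : Sym2 (Fin n) → (Fin n → ℝ) :=
  Sym2.lift ⟨fun i j => Pi.single i 1 + Pi.single j 1, fun i j => add_comm _ _⟩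

@[simp] lemma vecE_mk (i j : Fin n) : vecE s(i, j) = Pi.single i 1 + Pi.single j 1 := rfl

lemma vecE_apply {e : Sym2 (Fin n)} (he : ¬ e.IsDiag) (k : Fin n) :
    vecE e k = if k ∈ e then 1 else 0 := by
  induction e with
  | _ i j =>
    rw [Sym2.mk_isDiag_iff] at he
    simp only [vecE_mk, Pi.add_apply, Pi.single_apply, Sym2.mem_iff]
    by_cases hki : k = i <;> by_cases hkj : k = j <;> simp [hki, hkj, he] <;> omega
  -- omega fallback unlikely needed

lemma vecE_sum {e : Sym2 (Fin n)} (he : ¬ e.IsDiag) : ∑ k, vecE e k = 2 := by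
  induction e with
  | _ i j =>
    rw [Sym2.mk_isDiag_iff] at he
    simp only [vecE_mk, Pi.add_apply, Finset.sum_add_distrib, Finset.sum_pi_single']
    norm_num

variable {S : SimpleGraph (Fin n)}

/-- Alternating edge coefficients along a walk. -/
def wcoeff : {u v : Fin n} → S.Walk u v → Sym2 (Fin n) → ℝ
  | _, _, .nil => fun _ => 0
  | _, _, .cons (u := u) (v := w) _ p => fun e => (if e = s(u, w) then 1 else 0) - wcoeff p e

@[simp] lemma wcoeff_nil {u : Fin n} : wcoeff (.nil : S.Walk u u) = fun _ => 0 := rfl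

lemma wcoeff_cons {u w v : Fin n} (h : S.Adj u w) (p : S.Walk w v) (e : Sym2 (Fin n)) :
    wcoeff (Walk.cons h p) e = (if e = s(u, w) then 1 else 0) - wcoeff p e := rfl

lemma wcoeff_eq_zero {u v : Fin n} (p : S.Walk u v) {e : Sym2 (Fin n)} (he : e ∉ p.edges) :
    wcoeff p e = 0 := by
  induction p with
  | nil => rfl
  | cons h q ih =>
    rw [Walk.edges_cons, List.mem_cons] at he
    push_neg at he
    rw [wcoeff_cons, if_neg he.1, ih he.2, sub_zero]

lemma wcoeff_trail {u v : Fin n} {p : S.Walk u v} (hp : p.IsTrail) {e : Sym2 (Fin n)}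
    (he : e ∈ p.edges) : wcoeff p e = 1 ∨ wcoeff p e = -1 := by
  induction p with
  | nil => simp at he
  | cons h q ih =>
    rw [Walk.edges_cons, List.mem_cons] at he
    have hnd := hp.edges_nodup
    rw [Walk.edges_cons, List.nodup_cons] at hnd
    rcases he with he | he
    · left
      rw [wcoeff_cons, if_pos he, wcoeff_eq_zero q (he ▸ hnd.1), sub_zero]
    · have hne : e ≠ s(_, _) := fun hh => hnd.1 (hh ▸ he)
      rcases ih ⟨hnd.2⟩ he with h1 | h1 <;>
        rw [wcoeff_cons, if_neg hne, h1] <;> norm_num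

lemma wcoeff_sum {u v : Fin n} (p : S.Walk u v) (E : Finset (Sym2 (Fin n)))
    (hE : ∀ e ∈ p.edges, e ∈ E) :
    ∑ e ∈ E, wcoeff p e • vecE e
      = (Pi.single u 1 : Fin n → ℝ) - ((-1 : ℝ) ^ p.length) • (Pi.single v 1 : Fin n → ℝ) := by
  induction p with
  | nil => simp
  | cons h q ih =>
    rename_i a b c
    have hE' : ∀ e ∈ q.edges, e ∈ E := fun e he => hE e (by simp [Walk.edges_cons, he])
    have hab : s(a, b) ∈ E := hE _ (by simp [Walk.edges_cons])
    have : ∀ e ∈ E, wcoeff (Walk.cons h q) e • vecE e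
        = (if e = s(a, b) then vecE e else (0 : Fin n → ℝ)) - wcoeff q e • vecE e := by
      intro e _
      rw [wcoeff_cons, sub_smul, ite_smul, one_smul, zero_smul]
    rw [Finset.sum_congr rfl this, Finset.sum_sub_distrib, ih hE',
      Finset.sum_ite_eq' E (s(a, b)) vecE, if_pos hab]
    simp only [vecE_mk, Walk.length_cons, pow_succ]
    module




/-- In a path, at most one edge contains the final endpoint. -/
lemma edge_endpoint_unique {a b : Fin n} (p : S.Walk a b) (hp : p.IsPath) :
    ∀ e₁ ∈ p.edges, ∀ e₂ ∈ p.edges, b ∈ e₁ → b ∈ e₂ → e₁ = e₂ := by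
  induction p with
  | nil => intro e₁ h₁; simp at h₁
  | @cons u m b h q ih =>
    rw [Walk.cons_isPath_iff] at hp
    intro e₁ h₁ e₂ h₂ hb₁ hb₂
    rw [Walk.edges_cons, List.mem_cons] at h₁ h₂
    have aux : ∀ e ∈ q.edges, b ∈ s(u, m) → False := by
      intro e he hb
      rw [Sym2.mem_iff] at hb
      rcases hb with rfl | rfl
      · exact hp.2 (Walk.end_mem_support q)
      · have : q = Walk.nil := (Walk.isPath_iff_eq_nil (p := q)).mp hp.1
        rw [this] at he; simp at he
    rcases h₁ with h₁ | h₁ <;> rcases h₂ with h₂ | h₂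
    · rw [h₁, h₂]
    · exact absurd (aux e₂ h₂ (h₁ ▸ hb₁)) not_false
    · exact absurd (aux e₁ h₁ (h₂ ▸ hb₂)) not_false
    · exact ih hp.1 e₁ h₁ e₂ h₂ hb₁ hb₂

/-- Split a walk at the first vertex belonging to a set `T`. -/
lemma exists_prefix_to_set (T : Set (Fin n)) :
    ∀ {a b : Fin n} (p : S.Walk a b), (∃ z ∈ p.support, z ∈ T) →
    ∃ (y : Fin n) (q : S.Walk a y) (r : S.Walk y b),
      y ∈ T ∧ p = q.append r ∧ ∀ z ∈ q.support, z ∈ T → z = y := by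
  intro a b p
  induction p with
  | nil =>
    intro ⟨z, hz, hzT⟩
    rw [Walk.support_nil, List.mem_singleton] at hz
    subst hz
    exact ⟨z, Walk.nil, Walk.nil, hzT, rfl, by simp⟩
  | @cons u m b h q ih =>
    intro ⟨z, hz, hzT⟩
    by_cases hxT : u ∈ T
    · exact ⟨u, Walk.nil, Walk.cons h q, hxT, rfl, by simp⟩
    · have hz' : ∃ z ∈ q.support, z ∈ T := by
        rw [Walk.support_cons, List.mem_cons] at hz
        rcases hz with rfl | h1
        · exact absurd hzT hxT
        · exact ⟨z, h1, hzT⟩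
      obtain ⟨y, q₁, r₁, hyT, hsplit, honly⟩ := ih hz'
      refine ⟨y, Walk.cons h q₁, r₁, hyT, by rw [Walk.cons_append, ← hsplit], ?_⟩
      intro w hw hwT
      rw [Walk.support_cons, List.mem_cons] at hw
      rcases hw with rfl | hw
      · exact absurd hwT hxT
      · exact honly w hw hwT

/-- Appending an edge at the end of a path whose new endpoint is fresh gives a path. -/
lemma IsPath.concat' {a b c : Fin n} {p : S.Walk a b} (hp : p.IsPath) (h : S.Adj b c)
    (hc : c ∉ p.support) : (p.concat h).IsPath := by
  rw [← Walk.isPath_reverse_iff, Walk.reverse_concat, Walk.cons_isPath_iff,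
    Walk.isPath_reverse_iff]
  exact ⟨hp, by rwa [Walk.support_reverse, List.mem_reverse]⟩

/-- A maximal path with prescribed first edge: its far endpoint has all neighbors on the path. -/
lemma exists_maximal_path {w x : Fin n} (hadj : S.Adj w x) :
    ∃ (b : Fin n) (p' : S.Walk x b), (Walk.cons hadj p').IsPath ∧
      ∀ z, S.Adj b z → z ∈ (Walk.cons hadj p').support := by
  classical
  set P : ℕ → Prop := fun k => ∃ (b : Fin n) (p' : S.Walk x b),
    (Walk.cons hadj p').IsPath ∧ p'.length = k with hP
  have hP0 : P 0 := by
    refine ⟨x, Walk.nil, ?_, rfl⟩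
    rw [Walk.cons_isPath_iff]
    exact ⟨Walk.IsPath.nil, by simp [hadj.ne]⟩
  have hspec : P (Nat.findGreatest P n) := Nat.findGreatest_spec (Nat.zero_le n) hP0
  obtain ⟨b, p', hp, hlen⟩ := hspec
  refine ⟨b, p', hp, ?_⟩
  intro z hz
  by_contra hzs
  have hps : ((Walk.cons hadj p').concat hz).IsPath := IsPath.concat' hp hz hzs
  rw [Walk.concat_cons] at hps
  have hlt : (Walk.cons hadj (p'.concat hz)).length < n := by
    simpa using hps.length_lt
  have hle : p'.length + 1 ≤ Nat.findGreatest P n := by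
    apply Nat.le_findGreatest
    · rw [Walk.length_cons, Walk.length_concat] at hlt; omega
    · exact ⟨z, p'.concat hz, hps, by rw [Walk.length_concat]⟩
  omega

/-- At the saturated end of a maximal path one finds a cycle. -/
lemma cycle_at_end (hdeg : ∀ v y : Fin n, S.Adj v y → ∃ z, S.Adj v z ∧ z ≠ y)
    {w b : Fin n} (p : S.Walk w b) (hp : p.IsPath) (hwb : w ≠ b)
    (hsat : ∀ z, S.Adj b z → z ∈ p.support) :
    ∃ (z : Fin n) (hz : S.Adj b z) (t : S.Walk z b), (Walk.cons hz t).IsCycle := by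
  obtain ⟨c, hbc, q, _⟩ := Walk.exists_eq_cons_of_ne (Ne.symm hwb) p.reverse
  obtain ⟨z₂, hbz₂, hz₂c⟩ := hdeg b c hbc
  have hne : s(b, c) ≠ s(b, z₂) := fun hh => hz₂c (Sym2.congr_right.mp hh).symm
  have hone : ¬ (s(b, c) ∈ p.edges ∧ s(b, z₂) ∈ p.edges) := by
    rintro ⟨h1, h2⟩
    exact hne (edge_endpoint_unique p hp _ h1 _ h2 (Sym2.mem_mk_left b c)
      (Sym2.mem_mk_left b z₂))
  have : ∃ z, S.Adj b z ∧ s(b, z) ∉ p.edges := by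
    by_cases h1 : s(b, c) ∈ p.edges
    · exact ⟨z₂, hbz₂, fun h2 => hone ⟨h1, h2⟩⟩
    · exact ⟨c, hbc, h1⟩
  obtain ⟨z, hbz, hze⟩ := this
  have hzs : z ∈ p.support := hsat z hbz
  refine ⟨z, hbz, p.dropUntil z hzs, ?_⟩
  rw [Walk.cons_isCycle_iff]
  exact ⟨hp.dropUntil hzs, fun hh => hze (Walk.edges_dropUntil_subset p hzs hh)⟩



lemma rel_pair (g : Sym2 (Fin n) → ℝ) {w : Fin n} {e₁ e₂ : Sym2 (Fin n)}
    (h12 : e₁ ≠ e₂) (h1 : w ∈ e₁) (h2 : w ∈ e₂)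
    (hR : ∑ e : Sym2 (Fin n), g e * (if w ∈ e then 1 else 0) = 0)
    (honly : ∀ e, g e ≠ 0 → w ∈ e → e = e₁ ∨ e = e₂) :
    g e₁ + g e₂ = 0 := by
  classical
  have hsub : ({e₁, e₂} : Finset (Sym2 (Fin n))) ⊆ Finset.univ := Finset.subset_univ _
  have hz : ∀ e ∈ Finset.univ, e ∉ ({e₁, e₂} : Finset (Sym2 (Fin n))) →
      g e * (if w ∈ e then 1 else 0) = 0 := by
    intro e _ he
    by_cases hge : g e = 0
    · rw [hge, zero_mul]
    · by_cases hwe : w ∈ e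
      · rcases honly e hge hwe with rfl | rfl <;> simp at he
      · rw [if_neg hwe, mul_zero]
  rw [← Finset.sum_subset hsub hz, Finset.sum_pair h12, if_pos h1, if_pos h2,
    mul_one, mul_one] at hR
  exact hR

lemma rel_other (g : Sym2 (Fin n) → ℝ) {w : Fin n} {e₁ : Sym2 (Fin n)}
    (h1 : w ∈ e₁) (hg1 : g e₁ ≠ 0)
    (hR : ∑ e : Sym2 (Fin n), g e * (if w ∈ e then 1 else 0) = 0) :
    ∃ e₂, g e₂ ≠ 0 ∧ w ∈ e₂ ∧ e₂ ≠ e₁ := by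
  classical
  by_contra hc
  push_neg at hc
  have : ∑ e : Sym2 (Fin n), g e * (if w ∈ e then 1 else 0)
      = g e₁ * (if w ∈ e₁ then 1 else 0) := by
    apply Finset.sum_eq_single
    · intro b _ hb
      by_cases hgb : g b = 0
      · rw [hgb, zero_mul]
      · by_cases hwb : w ∈ b
        · exact absurd (hc b hgb hwb) hb
        · rw [if_neg hwb, mul_zero]
    · intro h; exact absurd (Finset.mem_univ e₁) h
  rw [this, if_pos h1, mul_one] at hR
  exact hg1 hR

lemma alt (g : Sym2 (Fin n) → ℝ)
    (hR : ∀ w : Fin n, ∑ e : Sym2 (Fin n), g e * (if w ∈ e then 1 else 0) = 0) {v0 : Fin n} :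
    ∀ {a : Fin n} (q : S.Walk a v0), q.IsPath →
    ∀ ein : Sym2 (Fin n), a ∈ ein → ein ∉ q.edges →
    (∀ w ∈ q.support, w ≠ v0 → w ≠ a → w ∉ ein) →
    (∀ w ∈ q.support, w ≠ v0 → ∀ e, g e ≠ 0 → w ∈ e → e = ein ∨ e ∈ q.edges) →
    ∃ eout, v0 ∈ eout ∧ g eout = (-1 : ℝ) ^ q.length * g ein ∧
      ((eout = ein ∧ q.length = 0) ∨ eout ∈ q.edges) := by
  intro a q
  induction q with
  | nil =>
    intro _ ein ha _ _ _
    exact ⟨ein, ha, by simp, Or.inl ⟨rfl, rfl⟩⟩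
  | @cons a m v0 h p ih =>
    intro hq ein ha hein hEin hB
    obtain ⟨hp', hans⟩ := (Walk.cons_isPath_iff h p).mp hq
    have ha_ne : a ≠ v0 := by
      rintro rfl
      have h0 := congrArg Walk.length ((Walk.isPath_iff_eq_nil).mp hq)
      simp at h0
    have hf₁p : s(a, m) ∉ p.edges := by
      have := hq.edges_nodup
      rw [Walk.edges_cons, List.nodup_cons] at this
      exact this.1
    have honly_a : ∀ e, g e ≠ 0 → a ∈ e → e = ein ∨ e = s(a, m) := by
      intro e hge hae
      rcases hB a (Walk.start_mem_support _) ha_ne e hge hae with h1 | h1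
      · exact Or.inl h1
      · rw [Walk.edges_cons, List.mem_cons] at h1
        rcases h1 with h1 | h1
        · exact Or.inr h1
        · exfalso
          obtain ⟨c, rfl⟩ := Sym2.mem_iff_exists.mp hae
          exact hans (p.fst_mem_support_of_mem_edges h1)
    have hne : ein ≠ s(a, m) := by
      intro hh
      exact hein (by rw [hh, Walk.edges_cons]; exact List.mem_cons_self)
    have hsum : g ein + g s(a, m) = 0 :=
      rel_pair g hne ha (Sym2.mem_mk_left a m) (hR a) honly_a
    have hEin' : ∀ w ∈ p.support, w ≠ v0 → w ≠ m → w ∉ s(a, m) := by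
      intro w hw _ hwm hmem
      rw [Sym2.mem_iff] at hmem
      rcases hmem with rfl | rfl
      · exact hans hw
      · exact hwm rfl
    have hB' : ∀ w ∈ p.support, w ≠ v0 → ∀ e, g e ≠ 0 → w ∈ e → e = s(a, m) ∨ e ∈ p.edges := by
      intro w hw hwv e hge hwe
      have hw' : w ∈ (Walk.cons h p).support := by
        rw [Walk.support_cons]; exact List.mem_cons_of_mem _ hw
      rcases hB w hw' hwv e hge hwe with h1 | h1
      · exfalso
        have hwa : w ≠ a := fun hh => hans (hh ▸ hw)
        exact (hEin w hw' hwv hwa) (h1 ▸ hwe)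
      · rw [Walk.edges_cons, List.mem_cons] at h1
        exact h1
    obtain ⟨eout, hv0, hval, hcase⟩ :=
      ih hp' s(a, m) (Sym2.mem_mk_right a m) hf₁p hEin' hB'
    refine ⟨eout, hv0, ?_, ?_⟩
    · rw [hval, Walk.length_cons, pow_succ]
      have : g s(a, m) = - g ein := by linarith
      rw [this]; ring
    · right
      rcases hcase with ⟨rfl, _⟩ | h1
      · rw [Walk.edges_cons]; exact List.mem_cons_self
      · rw [Walk.edges_cons]; exact List.mem_cons_of_mem _ h1

/-- theta construction: a path leaving a cycle and returning to it yields a second cycle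
containing the leaving edge. -/
lemma theta {w x y : Fin n} (hadj : S.Adj w x) (c' : S.Walk w w) (hc' : c'.IsCycle)
    (he' : s(w, x) ∉ c'.edges) (q' : S.Walk x y) (hq' : q'.IsPath) (hwq' : w ∉ q'.support)
    (hyc : y ∈ c'.support) (hyw : y ≠ w)
    (hint : ∀ z ∈ q'.support, z ∈ c'.support → z = y) :
    ∃ d : S.Walk y y, d.IsCycle ∧ s(w, x) ∈ d.edges ∧ w ∈ d.support := by
  cases c' with
  | nil => exact absurd rfl hc'.ne_nil
  | @cons _ m _ h₀ q₀ =>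
    obtain ⟨hq₀, hf₀⟩ := (Walk.cons_isCycle_iff q₀ h₀).mp hc'
    have hyq : y ∈ q₀.support := by
      rw [Walk.support_cons, List.mem_cons] at hyc
      rcases hyc with rfl | h1
      · exact absurd rfl hyw
      · exact h1
    set r' : S.Walk y w := q₀.dropUntil y hyq with hr'def
    have hr' : r'.IsPath := hq₀.dropUntil hyq
    have hr'e : ∀ e ∈ r'.edges, e ∈ (Walk.cons h₀ q₀).edges := by
      intro e he
      rw [Walk.edges_cons]
      exact List.mem_cons_of_mem _ (Walk.edges_dropUntil_subset q₀ hyq he)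
    have hr's : ∀ z ∈ r'.support, z ∈ (Walk.cons h₀ q₀).support := by
      intro z hz
      rw [Walk.support_cons]
      exact List.mem_cons_of_mem _ (Walk.support_dropUntil_subset q₀ hyq hz)
    set q : S.Walk w y := Walk.cons hadj q' with hqdef
    have hqPath : q.IsPath := (Walk.cons_isPath_iff hadj q').mpr ⟨hq', hwq'⟩
    have hA : ∀ e ∈ r'.edges, e ∉ q.edges := by
      intro e her heq
      rw [hqdef, Walk.edges_cons, List.mem_cons] at heq
      rcases heq with rfl | heq
      · exact he' (hr'e _ her)
      · have hnd : ¬ e.IsDiag := S.not_isDiag_of_mem_edgeSet (q'.edges_subset_edgeSet heq)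
        revert heq hnd her
        induction e with
        | _ c1 c2 =>
          intro her heq hnd
          have h1 : c1 ∈ q'.support := q'.fst_mem_support_of_mem_edges heq
          have h2 : c2 ∈ q'.support := q'.snd_mem_support_of_mem_edges heq
          have h1' : c1 ∈ (Walk.cons h₀ q₀).support :=
            (Walk.cons h₀ q₀).fst_mem_support_of_mem_edges (hr'e _ her)
          have h2' : c2 ∈ (Walk.cons h₀ q₀).support :=
            (Walk.cons h₀ q₀).snd_mem_support_of_mem_edges (hr'e _ her)
          have e1 : c1 = y := hint c1 h1 h1'
          have e2 : c2 = y := hint c2 h2 h2'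
          rw [Sym2.mk_isDiag_iff] at hnd
          exact hnd (e1.trans e2.symm)
    have hTrail : (r'.append q).IsTrail := by
      constructor
      rw [Walk.edges_append, List.nodup_append]
      exact ⟨hr'.edges_nodup, hqPath.edges_nodup, fun e he₁ e' he₂ hee => hA e he₁ (hee ▸ he₂)⟩
    have hNeNil : r'.append q ≠ Walk.nil := by
      intro hh
      have := congrArg Walk.length hh
      rw [Walk.length_append, Walk.length_nil, hqdef, Walk.length_cons] at this
      omega
    have hTail : (r'.append q).support.tail.Nodup := by
      have hsupp : (r'.append q).support = r'.support ++ q.support.tail :=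
        Walk.support_append r' q
      have hr'c : r'.support = y :: r'.support.tail := Walk.support_eq_cons r'
      have htl : (r'.append q).support.tail = r'.support.tail ++ q.support.tail := by
        rw [hsupp]; conv_lhs => rw [hr'c]
        rfl
      rw [htl]
      have hqt : q.support.tail = q'.support := by
        rw [hqdef, Walk.support_cons, List.tail_cons]
      rw [hqt, List.nodup_append]
      refine ⟨?_, hq'.support_nodup, ?_⟩
      · have := hr'.support_nodup
        rw [hr'c] at this
        exact this.of_cons
      · intro z hz z₂ hz' hzz
        subst hzz
        have hz1 : z ∈ r'.support := by rw [hr'c]; exact List.mem_cons_of_mem _ hz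
        have : z = y := hint z hz' (hr's _ hz1)
        subst this
        have := hr'.support_nodup
        rw [hr'c] at this
        exact (List.nodup_cons.mp this).1 hz
    refine ⟨r'.append q, ⟨⟨hTrail, hNeNil⟩, hTail⟩, ?_, ?_⟩
    · rw [Walk.edges_append, List.mem_append, hqdef, Walk.edges_cons]
      exact Or.inr (List.mem_cons_self)
    · rw [Walk.support_append, List.mem_append]
      exact Or.inl (Walk.end_mem_support r')


end EdgePolytopeAux

namespace EdgePolytopeAux
open SimpleGraph Finset
variable {n : ℕ} {S : SimpleGraph (Fin n)}

lemma cycle_kill (g : Sym2 (Fin n) → ℝ)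
    (hR : ∀ w : Fin n, ∑ e : Sym2 (Fin n), g e * (if w ∈ e then 1 else 0) = 0)
    {b₀ z₀ : Fin n} (hz₀ : S.Adj b₀ z₀) (t₀ : S.Walk z₀ b₀)
    (hc : (Walk.cons hz₀ t₀).IsCycle) (hodd : Odd (Walk.cons hz₀ t₀).length)
    (hgf : g s(b₀, z₀) ≠ 0)
    (hall : ∀ e, g e ≠ 0 → ∀ v, v ∈ e → v ∈ (Walk.cons hz₀ t₀).support →
      e ∈ (Walk.cons hz₀ t₀).edges) : False := by
  obtain ⟨ht₀, hf₀⟩ := (Walk.cons_isCycle_iff t₀ hz₀).mp hc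
  have hEin : ∀ w ∈ t₀.support, w ≠ b₀ → w ≠ z₀ → w ∉ s(b₀, z₀) := by
    intro w _ hw1 hw2 hmem
    rw [Sym2.mem_iff] at hmem
    tauto
  have hB : ∀ w ∈ t₀.support, w ≠ b₀ → ∀ e, g e ≠ 0 → w ∈ e →
      e = s(b₀, z₀) ∨ e ∈ t₀.edges := by
    intro w hw _ e hge hwe
    have : e ∈ (Walk.cons hz₀ t₀).edges := by
      refine hall e hge w hwe ?_
      rw [Walk.support_cons]
      exact List.mem_cons_of_mem _ hw
    rw [Walk.edges_cons, List.mem_cons] at this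
    exact this
  obtain ⟨eout, hv0, hval, hcase⟩ :=
    alt g hR t₀ ht₀ s(b₀, z₀) (Sym2.mem_mk_right b₀ z₀) hf₀ hEin hB
  rcases hcase with ⟨rfl, hlen0⟩ | heout
  · exact hz₀.ne (Walk.eq_of_length_eq_zero hlen0).symm
  · have heven : Even t₀.length := by
      rw [Walk.length_cons] at hodd
      rcases Nat.even_or_odd t₀.length with h | h
      · exact h
      · exact absurd hodd (by simp [Nat.odd_add_one, Nat.not_odd_iff_even, h, parity_simps])
    rw [heven.neg_one_pow, one_mul] at hval
    have hne : s(b₀, z₀) ≠ eout := fun hh => hf₀ (hh ▸ heout)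
    have honly : ∀ e, g e ≠ 0 → b₀ ∈ e → e = s(b₀, z₀) ∨ e = eout := by
      intro e hge hbe
      have : e ∈ (Walk.cons hz₀ t₀).edges :=
        hall e hge b₀ hbe (Walk.start_mem_support _)
      rw [Walk.edges_cons, List.mem_cons] at this
      rcases this with h1 | h1
      · exact Or.inl h1
      · exact Or.inr (edge_endpoint_unique t₀ ht₀ e h1 eout heout hbe hv0)
    have := rel_pair g hne (Sym2.mem_mk_left b₀ z₀) hv0 (hR b₀) honly
    rw [hval] at this
    apply hgf
    linarith

lemma core (H : SimpleGraph (Fin n)) (hcac : CactusLike H) (g : Sym2 (Fin n) → ℝ)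
    (hg : ∀ e, g e ≠ 0 → e ∈ H.edgeSet)
    (hR : ∀ w : Fin n, ∑ e : Sym2 (Fin n), g e * (if w ∈ e then 1 else 0) = 0) :
    ∀ e, g e = 0 := by
  classical
  set S : SimpleGraph (Fin n) := SimpleGraph.fromEdgeSet {e | g e ≠ 0} with hSdef
  have hSadj : ∀ a b : Fin n, g s(a, b) ≠ 0 → S.Adj a b := by
    intro a b h
    rw [hSdef, SimpleGraph.fromEdgeSet_adj]
    have hnd := H.not_isDiag_of_mem_edgeSet (hg _ h)
    rw [Sym2.mk_isDiag_iff] at hnd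
    exact ⟨h, hnd⟩
  have hadjS : ∀ a b : Fin n, S.Adj a b → g s(a, b) ≠ 0 := by
    intro a b h
    rw [hSdef, SimpleGraph.fromEdgeSet_adj] at h
    exact h.1
  have hSH : S ≤ H := by
    intro a b hab
    exact (H.mem_edgeSet).mp (hg _ (hadjS a b hab))
  have hdeg : ∀ v y : Fin n, S.Adj v y → ∃ z, S.Adj v z ∧ z ≠ y := by
    intro v y h
    obtain ⟨e₂, hge₂, hve₂, hne₂⟩ :=
      rel_other g (Sym2.mem_mk_left v y) (hadjS v y h) (hR v)
    obtain ⟨z, rfl⟩ := Sym2.mem_iff_exists.mp hve₂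
    refine ⟨z, hSadj v z hge₂, ?_⟩
    rintro rfl
    exact hne₂ rfl
  intro e₀
  by_contra he₀
  revert he₀
  induction e₀ with
  | _ w₀ x₀ =>
    intro he₀
    have hadj₀ : S.Adj w₀ x₀ := hSadj _ _ he₀
    obtain ⟨b₀, p₀', hpath₀, hsat₀⟩ := exists_maximal_path hadj₀
    have hwp₀ : w₀ ∉ p₀'.support := ((Walk.cons_isPath_iff hadj₀ p₀').mp hpath₀).2
    have hw₀b₀ : w₀ ≠ b₀ := fun hh => hwp₀ (hh ▸ Walk.end_mem_support p₀')
    obtain ⟨z₀, hz₀, t₀, hc₀⟩ :=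
      cycle_at_end hdeg (Walk.cons hadj₀ p₀') hpath₀ hw₀b₀ hsat₀
    set c₀ : S.Walk b₀ b₀ := Walk.cons hz₀ t₀ with hc₀def
    have hc₀E : ∀ e ∈ c₀.edges, e ∈ H.edgeSet :=
      fun e he => SimpleGraph.edgeSet_mono hSH (c₀.edges_subset_edgeSet he)
    have hodd₀ : Odd c₀.length := by
      have := hcac.1 b₀ (c₀.transfer H hc₀E) (hc₀.transfer hc₀E)
      rwa [Walk.length_transfer] at this
    by_cases hall : ∀ e, g e ≠ 0 → ∀ v, v ∈ e → v ∈ c₀.support → e ∈ c₀.edges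
    · exact cycle_kill g hR hz₀ t₀ hc₀ hodd₀ (hadjS _ _ hz₀) hall
    · push_neg at hall
      obtain ⟨e', hge', w, hwe', hwsupp, he'c⟩ := hall
      set c' : S.Walk w w := c₀.rotate w hwsupp with hc'def
      have hc' : c'.IsCycle := hc₀.rotate hwsupp
      have hrotE := (c₀.rotate_edges w hwsupp).mem_iff (a := e')
      have he'c' : e' ∉ c'.edges := fun hh => he'c (hrotE.mp hh)
      obtain ⟨x, rfl⟩ := Sym2.mem_iff_exists.mp hwe'
      have hadj2 : S.Adj w x := hSadj _ _ hge'
      obtain ⟨b, p', hp2, hsat2⟩ := exists_maximal_path hadj2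
      have hwp' : w ∉ p'.support := ((Walk.cons_isPath_iff hadj2 p').mp hp2).2
      have hwb : w ≠ b := fun hh => hwp' (hh ▸ Walk.end_mem_support p')
      have hc'E : ∀ e ∈ c'.edges, e ∈ H.edgeSet :=
        fun e he => SimpleGraph.edgeSet_mono hSH (c'.edges_subset_edgeSet he)
      by_cases hreent : ∃ z ∈ p'.support, z ∈ c'.support
      · obtain ⟨y, q', r'', hyT, hsplit, honly'⟩ :=
          exists_prefix_to_set {z | z ∈ c'.support} p' hreent
        have hq'path : q'.IsPath := by
          have : p'.IsPath := ((Walk.cons_isPath_iff hadj2 p').mp hp2).1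
          rw [hsplit] at this
          exact this.of_append_left
        have hq'sub : ∀ z ∈ q'.support, z ∈ p'.support := by
          intro z hz
          rw [hsplit]
          exact Walk.subset_support_append_left q' r'' hz
        have hwq' : w ∉ q'.support := fun hh => hwp' (hq'sub _ hh)
        have hyw : y ≠ w := fun hh => hwq' (hh ▸ Walk.end_mem_support q')
        obtain ⟨d, hd, hwxd, hwd⟩ :=
          theta hadj2 c' hc' he'c' q' hq'path hwq' hyT hyw honly'
        have hdE : ∀ e ∈ d.edges, e ∈ H.edgeSet :=
          fun e he => SimpleGraph.edgeSet_mono hSH (d.edges_subset_edgeSet he)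
        have hreachS : S.Reachable y w := ⟨d.takeUntil w hwd⟩
        have hreach : H.Reachable y w := hreachS.mono hSH
        have := hcac.2 y w (d.transfer H hdE) (c'.transfer H hc'E)
          (hd.transfer hdE) (hc'.transfer hc'E) hreach s(w, x)
        rw [Walk.edges_transfer, Walk.edges_transfer] at this
        exact he'c' (this.mp hwxd)
      · push_neg at hreent
        have hbc' : b ∉ c'.support := hreent b (Walk.end_mem_support p')
        obtain ⟨z', hz', t', hd⟩ :=
          cycle_at_end hdeg (Walk.cons hadj2 p') hp2 hwb hsat2
        set d : S.Walk b b := Walk.cons hz' t' with hddef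
        have hbzd : s(b, z') ∈ d.edges := by
          rw [hddef, Walk.edges_cons]
          exact List.mem_cons_self
        have hbzc' : s(b, z') ∉ c'.edges :=
          fun hh => hbc' (c'.fst_mem_support_of_mem_edges hh)
        have hdE : ∀ e ∈ d.edges, e ∈ H.edgeSet :=
          fun e he => SimpleGraph.edgeSet_mono hSH (d.edges_subset_edgeSet he)
        have hreachS : S.Reachable w b := ⟨Walk.cons hadj2 p'⟩
        have hreach : H.Reachable b w := hreachS.symm.mono hSH
        have := hcac.2 b w (d.transfer H hdE) (c'.transfer H hc'E)
          (hd.transfer hdE) (hc'.transfer hc'E) hreach s(b, z')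
        rw [Walk.edges_transfer, Walk.edges_transfer] at this
        exact hbzc' (this.mp hbzd)

end EdgePolytopeAux

namespace EdgePolytopeAux
open SimpleGraph Finset
variable {n : ℕ}

lemma vecE_mem (H : SimpleGraph (Fin n)) : ∀ e ∈ H.edgeSet, vecE e ∈ edgeVectors H := by
  rintro ⟨i, j⟩ h
  exact ⟨i, j, H.mem_edgeSet.mp h, rfl⟩

lemma vecE_inj {e₁ e₂ : Sym2 (Fin n)} (h₁ : ¬e₁.IsDiag) (h₂ : ¬e₂.IsDiag)
    (h : vecE e₁ = vecE e₂) : e₁ = e₂ := by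
  have hm : ∀ k, k ∈ e₁ ↔ k ∈ e₂ := by
    intro k
    have := congrFun h k
    rw [vecE_apply h₁, vecE_apply h₂] at this
    by_cases hk1 : k ∈ e₁ <;> by_cases hk2 : k ∈ e₂ <;> simp [hk1, hk2] at this ⊢ <;> norm_num at this
  revert h₁ h₂ hm
  induction e₁ with
  | _ i j =>
    induction e₂ with
    | _ k l =>
      intro h₁ h₂ hm
      rw [Sym2.mk_isDiag_iff] at h₁ h₂
      have hi := (hm i).mp (Sym2.mem_mk_left i j)
      have hj := (hm j).mp (Sym2.mem_mk_right i j)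
      rw [Sym2.mem_iff] at hi hj
      rw [Sym2.eq_iff]
      rcases hi with rfl | rfl <;> rcases hj with rfl | rfl <;> tauto
    
lemma sum_subtype_eq (H : SimpleGraph (Fin n)) [Fintype ↥H.edgeSet]
    (g : Sym2 (Fin n) → ℝ) (hg0 : ∀ e, e ∉ H.edgeSet → g e = 0) :
    ∑ i : H.edgeSet, g ↑i • vecE ↑i = ∑ e : Sym2 (Fin n), g e • vecE e := by
  rw [Finset.sum_set_coe (f := fun e => g e • vecE e)]
  apply Finset.sum_subset (Finset.subset_univ _)
  intro e _ he
  rw [Set.mem_toFinset] at he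
  rw [hg0 e he, zero_smul]

lemma relation_of_sum (H : SimpleGraph (Fin n)) (g : Sym2 (Fin n) → ℝ)
    (hg : ∀ e, g e ≠ 0 → e ∈ H.edgeSet)
    (hsum : ∑ e : Sym2 (Fin n), g e • vecE e = 0) :
    ∀ k : Fin n, ∑ e : Sym2 (Fin n), g e * (if k ∈ e then 1 else 0) = 0 := by
  intro k
  have h0 := congrFun hsum k
  rw [Finset.sum_apply, Pi.zero_apply] at h0
  have heq : ∑ e : Sym2 (Fin n), g e * (if k ∈ e then 1 else 0)
      = ∑ e : Sym2 (Fin n), (g e • vecE e) k := by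
    apply Finset.sum_congr rfl
    intro e _
    rw [Pi.smul_apply, smul_eq_mul]
    by_cases hge : g e = 0
    · rw [hge, zero_mul, zero_mul]
    · rw [vecE_apply (H.not_isDiag_of_mem_edgeSet (hg e hge))]
  rw [heq]
  exact h0

/-- Even cycle gives a dependence. -/
lemma dep_even_cycle (H : SimpleGraph (Fin n)) {v : Fin n} (c : H.Walk v v)
    (hc : c.IsCycle) (heven : Even c.length) :
    ∃ g : Sym2 (Fin n) → ℝ, (∀ e, g e ≠ 0 → e ∈ H.edgeSet) ∧
      (∑ e : Sym2 (Fin n), g e • vecE e = 0) ∧ ∃ e₀, g e₀ ≠ 0 ∧ e₀ ∈ H.edgeSet := by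
  refine ⟨wcoeff c, ?_, ?_, ?_⟩
  · intro e hge
    by_contra he
    exact hge (wcoeff_eq_zero c (fun hmem => he (c.edges_subset_edgeSet hmem)))
  · rw [wcoeff_sum c Finset.univ (fun e _ => Finset.mem_univ e), heven.neg_one_pow, one_smul,
      sub_self]
  · cases c with
    | nil => exact absurd rfl hc.ne_nil
    | @cons _ m _ h t =>
      refine ⟨s(v, m), ?_, H.mem_edgeSet.mpr h⟩
      have hmem : s(v, m) ∈ (Walk.cons h t).edges := by
        rw [Walk.edges_cons]; exact List.mem_cons_self
      rcases wcoeff_trail hc.isCircuit.isTrail hmem with h1 | h1 <;> rw [h1] <;> norm_num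

/-- Two odd cycles, reachable, with an edge in one but not the other: dependence. -/
lemma dep_two_cycles (H : SimpleGraph (Fin n))
    (hodd : ∀ (v : Fin n) (c : H.Walk v v), c.IsCycle → Odd c.length)
    {u v : Fin n} (c : H.Walk u u) (d : H.Walk v v) (hc : c.IsCycle) (hd : d.IsCycle)
    (hreach : H.Reachable u v) {e₀ : Sym2 (Fin n)} (hec : e₀ ∈ c.edges) (hed : e₀ ∉ d.edges) :
    ∃ g : Sym2 (Fin n) → ℝ, (∀ e, g e ≠ 0 → e ∈ H.edgeSet) ∧
      (∑ e : Sym2 (Fin n), g e • vecE e = 0) ∧ ∃ e₀, g e₀ ≠ 0 ∧ e₀ ∈ H.edgeSet := by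
  obtain ⟨wk⟩ := hreach
  set p := wk.bypass with hpdef
  have hp : p.IsPath := wk.bypass_isPath
  set σ : ℝ := (-1 : ℝ) ^ p.length with hσdef
  refine ⟨fun e => -(wcoeff c e) + 2 * wcoeff p e + σ * wcoeff d e, ?_, ?_, ?_⟩
  · intro e hge
    by_contra he
    apply hge
    show -(wcoeff c e) + 2 * wcoeff p e + σ * wcoeff d e = 0
    rw [wcoeff_eq_zero c (fun hmem => he (c.edges_subset_edgeSet hmem)),
      wcoeff_eq_zero p (fun hmem => he (p.edges_subset_edgeSet hmem)),
      wcoeff_eq_zero d (fun hmem => he (d.edges_subset_edgeSet hmem))]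
    ring
  · have hsplit : ∀ e ∈ Finset.univ,
        (-(wcoeff c e) + 2 * wcoeff p e + σ * wcoeff d e) • vecE e
          = -(wcoeff c e • vecE e) + (2 : ℝ) • (wcoeff p e • vecE e)
            + σ • (wcoeff d e • vecE e) := by
      intro e _
      rw [add_smul, add_smul, neg_smul, smul_smul, smul_smul]
    rw [Finset.sum_congr rfl hsplit]
    rw [Finset.sum_add_distrib, Finset.sum_add_distrib, Finset.sum_neg_distrib,
      ← Finset.smul_sum, ← Finset.smul_sum]
    rw [wcoeff_sum c Finset.univ (fun e _ => Finset.mem_univ e),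
      wcoeff_sum p Finset.univ (fun e _ => Finset.mem_univ e),
      wcoeff_sum d Finset.univ (fun e _ => Finset.mem_univ e)]
    rw [(hodd u c hc).neg_one_pow, (hodd v d hd).neg_one_pow, ← hσdef]
    have hσ2 : σ * σ = 1 := by
      rw [hσdef, ← pow_add]
      exact Even.neg_one_pow ⟨p.length, rfl⟩
    match_scalars <;> simp <;> nlinarith [hσ2]
  · refine ⟨e₀, ?_, c.edges_subset_edgeSet hec⟩
    show -(wcoeff c e₀) + 2 * wcoeff p e₀ + σ * wcoeff d e₀ ≠ 0
    rw [wcoeff_eq_zero d hed, mul_zero, add_zero]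
    have h1 := wcoeff_trail hc.isCircuit.isTrail hec
    have h2 : wcoeff p e₀ = 0 ∨ wcoeff p e₀ = 1 ∨ wcoeff p e₀ = -1 := by
      by_cases hmem : e₀ ∈ p.edges
      · exact Or.inr (wcoeff_trail hp.isTrail hmem)
      · exact Or.inl (wcoeff_eq_zero p hmem)
    rcases h1 with h1 | h1 <;> rcases h2 with h2 | h2 | h2 <;> rw [h1, h2] <;> norm_num

lemma dependence_of_not_cactus (H : SimpleGraph (Fin n)) (hncac : ¬ CactusLike H) :
    ∃ g : Sym2 (Fin n) → ℝ, (∀ e, g e ≠ 0 → e ∈ H.edgeSet) ∧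
      (∑ e : Sym2 (Fin n), g e • vecE e = 0) ∧ ∃ e₀, g e₀ ≠ 0 ∧ e₀ ∈ H.edgeSet := by
  by_cases hodd : ∀ (v : Fin n) (c : H.Walk v v), c.IsCycle → Odd c.length
  · have hB : ¬ (∀ (u v : Fin n) (c : H.Walk u u) (d : H.Walk v v), c.IsCycle → d.IsCycle →
        H.Reachable u v → ∀ e : Sym2 (Fin n), e ∈ c.edges ↔ e ∈ d.edges) := by
      intro hB
      exact hncac ⟨hodd, hB⟩
    push_neg at hB
    obtain ⟨u, v, c, d, hc, hd, hreach, e₀, hne⟩ := hB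
    rcases hne with ⟨hec, hed⟩ | ⟨hec, hed⟩
    · exact dep_two_cycles H hodd c d hc hd hreach hec hed
    · exact dep_two_cycles H hodd d c hd hc hreach.symm hed hec
  · push_neg at hodd
    obtain ⟨v, c, hc, hnodd⟩ := hodd
    exact dep_even_cycle H c hc (Nat.not_odd_iff_even.mp hnodd)

lemma linIndep_iff_cactus (H : SimpleGraph (Fin n)) :
    LinearIndependent ℝ (fun i : H.edgeSet => vecE (i : Sym2 (Fin n))) ↔ CactusLike H := by
  classical
  constructor
  · intro hlin
    by_contra hncac
    obtain ⟨g, hg, hsum, e₀, hge₀, he₀⟩ := dependence_of_not_cactus H hncac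
    have hg0 : ∀ e, e ∉ H.edgeSet → g e = 0 := by
      intro e he
      by_contra hh
      exact he (hg e hh)
    have := Fintype.linearIndependent_iff.mp hlin (fun i => g ↑i)
      (by rw [sum_subtype_eq H g hg0]; exact hsum) ⟨e₀, he₀⟩
    exact hge₀ this
  · intro hcac
    apply Fintype.linearIndependent_iff.mpr
    intro G hsumG i
    set g : Sym2 (Fin n) → ℝ := fun e => if h : e ∈ H.edgeSet then G ⟨e, h⟩ else 0 with hgdef
    have hg : ∀ e, g e ≠ 0 → e ∈ H.edgeSet := by
      intro e hge
      by_contra hh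
      exact hge (by rw [hgdef]; exact dif_neg hh)
    have hgeq : ∀ i : H.edgeSet, g ↑i = G i := by
      intro i
      rw [hgdef]
      exact dif_pos i.2
    have hsum : ∑ e : Sym2 (Fin n), g e • vecE e = 0 := by
      rw [← sum_subtype_eq H g (fun e he => by rw [hgdef]; exact dif_neg he)]
      rw [← hsumG]
      exact Finset.sum_congr rfl fun i _ => by rw [hgeq]
    have := core H hcac g hg (relation_of_sum H g hg hsum) i
    rw [← hgeq i, this]

lemma affine_iff_linear (H : SimpleGraph (Fin n)) :
    AffineIndependent ℝ (fun i : H.edgeSet => vecE (i : Sym2 (Fin n))) ↔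
      LinearIndependent ℝ (fun i : H.edgeSet => vecE (i : Sym2 (Fin n))) := by
  constructor
  · intro haff
    rw [linearIndependent_iff']
    intro s gw hsum i hi
    have hw0 : ∑ i ∈ s, gw i = 0 := by
      have h2 : ∑ k, (∑ i ∈ s, gw i • (fun j : H.edgeSet => vecE (j : Sym2 (Fin n))) i) k = 0 := by
        rw [hsum]; simp
      simp only [Finset.sum_apply, Pi.smul_apply, smul_eq_mul] at h2
      rw [Finset.sum_comm] at h2
      simp only [← Finset.mul_sum] at h2
      have h3 : ∀ i ∈ s, gw i * (∑ k, vecE (i : Sym2 (Fin n)) k) = gw i * 2 := by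
        intro i _
        rw [vecE_sum (H.not_isDiag_of_mem_edgeSet i.2)]
      rw [Finset.sum_congr rfl h3, ← Finset.sum_mul] at h2
      linarith
    exact affineIndependent_iff.mp haff s gw hw0 hsum i hi
  · intro hlin
    rw [affineIndependent_iff]
    intro s w _ hsum
    exact linearIndependent_iff'.mp hlin s w hsum

end EdgePolytopeAux

open EdgePolytopeAux in
/-- For a graph `H` with no isolated vertices, the edge polytope `P(H)` is a simplex
(i.e. its vertices `e i + e j`, over the edges of `H`, are affinely independent) if
and only if every cycle of `H` is odd and every connected component of `H` contains
at most one cycle. -/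
theorem edgePolytope_simplex_iff {n : ℕ} (H : SimpleGraph (Fin n))
    (hiso : ∀ v : Fin n, ∃ w : Fin n, H.Adj v w) :
    AffineIndependent ℝ ((↑) : edgeVectors H → (Fin n → ℝ)) ↔ CactusLike H := by
  have hbij : Function.Bijective
      (fun i : H.edgeSet => (⟨vecE ↑i, vecE_mem H ↑i i.2⟩ : edgeVectors H)) := by
    constructor
    · intro i j hij
      apply Subtype.ext
      exact vecE_inj (H.not_isDiag_of_mem_edgeSet i.2) (H.not_isDiag_of_mem_edgeSet j.2)
        (congrArg Subtype.val hij)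
    · rintro ⟨x, i, j, hadj, rfl⟩
      exact ⟨⟨s(i, j), (H.mem_edgeSet).mpr hadj⟩, rfl⟩
  let E : H.edgeSet ≃ edgeVectors H := Equiv.ofBijective _ hbij
  have hcomp : (((↑) : edgeVectors H → (Fin n → ℝ)) ∘ E)
      = fun i : H.edgeSet => vecE (i : Sym2 (Fin n)) := rfl
  rw [← affineIndependent_equiv E, hcomp, affine_iff_linear, linIndep_iff_cactus]
end

section
/- Let G be a finite connected simple graph with at least two vertices, and suppose d := dim(P(G)) ≥ 3. Then the edge polytope P(G) has at most 2^d + d facets. -/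
open Set

/-- The edge polytope of a graph `G` on the vertex set `Fin n`. -/
def edgePolytope {n : ℕ} (G : SimpleGraph (Fin n)) : Set (Fin n → ℝ) :=
  convexHull ℝ {x | ∃ i j : Fin n, G.Adj i j ∧ x = Pi.single i 1 + Pi.single j 1}

/-- The dimension of a polytope: the dimension of its affine hull. -/
noncomputable def polyDim {n : ℕ} (P : Set (Fin n → ℝ)) : ℕ :=
  Module.finrank ℝ (vectorSpan ℝ P)

/-- `faceCount P k` is the number of (nonempty) `k`-dimensional faces of `P`,
a face being the intersection of `P` with a supporting hyperplane (`IsExposed`). -/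
noncomputable def faceCount {n : ℕ} (P : Set (Fin n → ℝ)) (k : ℕ) : ℕ :=
  {F : Set (Fin n → ℝ) | IsExposed ℝ P F ∧ F.Nonempty ∧ polyDim F = k}.ncard

namespace EPAux

open scoped Classical

noncomputable section

variable {n : ℕ}

/-- dot product on `Fin n → ℝ` -/
def dot (u v : Fin n → ℝ) : ℝ := ∑ i, u i * v i

/-- edge vector -/
def ev (i j : Fin n) : Fin n → ℝ := Pi.single i 1 + Pi.single j 1

/-- the generating set of the edge polytope -/
def gen (G : SimpleGraph (Fin n)) : Set (Fin n → ℝ) := {x | ∃ i j, G.Adj i j ∧ x = ev i j}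

lemma edgePolytope_eq (G : SimpleGraph (Fin n)) : edgePolytope G = convexHull ℝ (gen G) := rfl

lemma dot_add_right (u x y : Fin n → ℝ) : dot u (x + y) = dot u x + dot u y := by
  simp [dot, mul_add, Finset.sum_add_distrib]

lemma dot_single_right (u : Fin n → ℝ) (i : Fin n) : dot u (Pi.single i 1) = u i := by
  simp [dot, Pi.single_apply, mul_ite]

lemma dot_ev (u : Fin n → ℝ) (i j : Fin n) : dot u (ev i j) = u i + u j := by
  simp [ev, dot_add_right, dot_single_right]

/-- `dot · x` as a linear map in the second argument -/
def dmap (u : Fin n → ℝ) : (Fin n → ℝ) →ₗ[ℝ] ℝ where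
  toFun v := dot u v
  map_add' x y := dot_add_right u x y
  map_smul' c x := by simp [dot, Finset.mul_sum]; ring_nf; simp [mul_assoc, mul_comm, mul_left_comm]

lemma dmap_apply (u v : Fin n → ℝ) : dmap u v = dot u v := rfl

lemma gen_finite (G : SimpleGraph (Fin n)) : (gen G).Finite := by
  apply Set.Finite.subset (Set.finite_range (fun p : Fin n × Fin n => ev p.1 p.2))
  rintro x ⟨i, j, _, rfl⟩
  exact ⟨(i, j), rfl⟩

lemma ev_apply (i j v : Fin n) : ev i j v = (if v = i then 1 else 0) + (if v = j then 1 else 0) := by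
  simp [ev, Pi.single_apply]

lemma ev_nonneg (i j v : Fin n) : 0 ≤ ev i j v := by
  rw [ev_apply]; positivity

lemma ev_self (i j : Fin n) (h : i ≠ j) : ev i j i = 1 := by
  rw [ev_apply, if_pos rfl, if_neg h]; norm_num

lemma ev_ne_zero {i j : Fin n} (h : i ≠ j) : ev i j ≠ 0 := by
  intro hc
  have := congrFun hc i
  rw [ev_self i j h] at this
  simp at this

lemma ev_zero_iff (i j v : Fin n) : ev i j v = 0 ↔ v ≠ i ∧ v ≠ j := by
  rw [ev_apply]
  constructor
  · intro h
    constructor <;> rintro rfl <;> simp at h <;> split_ifs at h <;> norm_num at h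
  · rintro ⟨h1, h2⟩
    rw [if_neg h1, if_neg h2]; norm_num

/-- the "faces from normal vectors" construction -/
def cface (G : SimpleGraph (Fin n)) (u : Fin n → ℝ) : Set (Fin n → ℝ) :=
  convexHull ℝ {x | x ∈ gen G ∧ dot u x = 0}

/-- a valid (outer) normal vector: all generators on the nonpositive side -/
def Valid (G : SimpleGraph (Fin n)) (u : Fin n → ℝ) : Prop := ∀ x ∈ gen G, dot u x ≤ 0

/-- Every nonempty exposed face of the edge polytope is `cface G a` for a valid normal `a`. -/
lemma exists_normal (G : SimpleGraph (Fin n)) (hgne : (gen G).Nonempty)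
    {F : Set (Fin n → ℝ)} (hex : IsExposed ℝ (edgePolytope G) F) (hne : F.Nonempty) :
    ∃ a : Fin n → ℝ, Valid G a ∧ F = cface G a := by
  obtain ⟨l, hF⟩ := hex hne
  set P := edgePolytope G with hP
  have hPc : P = convexHull ℝ (gen G) := rfl
  -- max of l on gen
  have hfin := gen_finite G
  obtain ⟨xm, hxm, hmax⟩ := Finset.exists_max_image hfin.toFinset l
    (hfin.toFinset_nonempty.2 hgne)
  rw [Set.Finite.mem_toFinset] at hxm
  set M := l xm with hM
  have hmax' : ∀ y ∈ gen G, l y ≤ M := fun y hy => hmax y (hfin.mem_toFinset.2 hy)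
  -- everything in P is ≤ M
  have hPle : ∀ y ∈ P, l y ≤ M := by
    intro y hy
    rw [hPc] at hy
    have : convexHull ℝ (gen G) ⊆ {y | l y ≤ M} := by
      apply convexHull_min hmax'
      exact convex_halfSpace_le ⟨fun a b => map_add l a b, fun c a => map_smul l c a⟩ M
    exact this hy
  have hxmP : xm ∈ P := by rw [hPc]; exact subset_convexHull ℝ _ hxm
  -- F = {x ∈ P | l x = M}
  have hFM : F = {x ∈ P | l x = M} := by
    rw [hF]
    ext x
    constructor
    · rintro ⟨hxP, hxge⟩
      exact ⟨hxP, le_antisymm (hPle x hxP) (hxge xm hxmP)⟩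
    · rintro ⟨hxP, hxM⟩
      exact ⟨hxP, fun y hy => (hPle y hy).trans hxM.symm.le⟩
  -- the normal vector
  set a : Fin n → ℝ := fun i => l (Pi.single i 1) - M / 2 with ha
  have key : ∀ x ∈ gen G, dot a x = l x - M := by
    rintro x ⟨i, j, hadj, rfl⟩
    rw [dot_ev]
    have : l (ev i j) = l (Pi.single i 1) + l (Pi.single j 1) := map_add l _ _
    rw [this, ha]
    ring
  have hvalid : Valid G a := by
    intro x hx
    rw [key x hx]
    have : x ∈ P := by rw [hPc]; exact subset_convexHull ℝ _ hx
    linarith [hPle x this]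
  refine ⟨a, hvalid, ?_⟩
  -- W as a set
  have hWeq : {x | x ∈ gen G ∧ dot a x = 0} = {x | x ∈ gen G ∧ l x = M} := by
    ext x
    constructor
    · rintro ⟨hx, hd⟩; rw [key x hx] at hd; exact ⟨hx, by linarith⟩
    · rintro ⟨hx, hd⟩; exact ⟨hx, by rw [key x hx, hd]; ring⟩
  rw [cface, hWeq]
  apply Subset.antisymm
  · -- F ⊆ conv W
    intro x hx
    rw [hFM] at hx
    obtain ⟨hxP, hxM⟩ := hx
    rw [hPc, ← hfin.coe_toFinset] at hxP
    rw [Finset.mem_convexHull'] at hxP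
    obtain ⟨w, hw0, hw1, hwx⟩ := hxP
    set gf := hfin.toFinset
    have hlx : ∑ y ∈ gf, w y * l y = M := by
      have : l x = ∑ y ∈ gf, w y * l y := by
        rw [← hwx, map_sum]
        congr 1; ext y; rw [map_smul]; simp
      rw [← this, hxM]
    have hsum0 : ∑ y ∈ gf, w y * (M - l y) = 0 := by
      have : ∑ y ∈ gf, w y * (M - l y) = (∑ y ∈ gf, w y) * M - ∑ y ∈ gf, w y * l y := by
        rw [Finset.sum_mul, ← Finset.sum_sub_distrib]
        congr 1; ext y; ring
      rw [this, hw1, hlx]; ring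
    have hterm : ∀ y ∈ gf, w y * (M - l y) = 0 := by
      refine (Finset.sum_eq_zero_iff_of_nonneg ?_).1 hsum0
      intro y hy
      have := hmax' y (hfin.mem_toFinset.1 hy)
      have := hw0 y hy
      nlinarith
    set Wf := gf.filter (fun y => l y = M) with hWf
    have hzero : ∀ y ∈ gf, y ∉ Wf → w y = 0 := by
      intro y hy hyW
      rw [hWf, Finset.mem_filter] at hyW
      push_neg at hyW
      have hne' : l y ≠ M := hyW hy
      have := hterm y hy
      rcases mul_eq_zero.1 this with h | h
      · exact h
      · exfalso; apply hne'; linarith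
    have hw1' : ∑ y ∈ Wf, w y = 1 := by
      rw [← hw1]
      exact Finset.sum_subset (Finset.filter_subset _ _)
        (fun y hy hyW => hzero y hy hyW)
    have hwx' : ∑ y ∈ Wf, w y • y = x := by
      rw [← hwx]
      exact Finset.sum_subset (Finset.filter_subset _ _)
        (fun y hy hyW => by rw [hzero y hy hyW, zero_smul])
    have : x ∈ convexHull ℝ (↑Wf : Set (Fin n → ℝ)) := by
      rw [Finset.mem_convexHull']
      exact ⟨w, fun y hy => hw0 y (Finset.filter_subset _ _ hy), hw1', hwx'⟩
    apply convexHull_mono _ this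
    intro y hy
    rw [hWf, Finset.mem_coe, Finset.mem_filter] at hy
    exact ⟨hfin.mem_toFinset.1 hy.1, hy.2⟩
  · -- conv W ⊆ F
    rw [hFM]
    apply convexHull_min
    · rintro x ⟨hx, hxM⟩
      exact ⟨by rw [hPc]; exact subset_convexHull ℝ _ hx, hxM⟩
    · apply Convex.inter
      · rw [hPc]; exact convex_convexHull ℝ _
      · exact convex_hyperplane ⟨fun a b => map_add l a b, fun c a => map_smul l c a⟩ M
lemma vectorSpan_convexHull (s : Set (Fin n → ℝ)) :
    vectorSpan ℝ (convexHull ℝ s) = vectorSpan ℝ s := by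
  rw [← direction_affineSpan, ← direction_affineSpan ℝ s, affineSpan_convexHull]

lemma vectorSpan_le_ker (u : Fin n → ℝ) (s : Set (Fin n → ℝ)) (h : ∀ x ∈ s, dot u x = 0) :
    vectorSpan ℝ s ≤ LinearMap.ker (dmap u) := by
  rw [vectorSpan_def, Submodule.span_le]
  rintro v ⟨x, hx, y, hy, rfl⟩
  simp only [SetLike.mem_coe, LinearMap.mem_ker, vsub_eq_sub, map_sub, dmap_apply]
  rw [h x hx, h y hy]; ring

/-- key replacement lemma : a facet is determined by any valid normal vanishing on it -/
lemma face_eq_of_valid (G : SimpleGraph (Fin n)) {d : ℕ}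
    (hd : d = polyDim (convexHull ℝ (gen G)))
    (hd1 : 1 ≤ d) {F : Set (Fin n → ℝ)} {a u : Fin n → ℝ}
    (hFa : F = cface G a) (hne : F.Nonempty) (hdim : polyDim F = d - 1)
    (hu : Valid G u) (hsub : ∀ x ∈ gen G, dot a x = 0 → dot u x = 0)
    (hnz : ∃ x ∈ gen G, dot u x ≠ 0) :
    F = cface G u := by
  have hWW : {x | x ∈ gen G ∧ dot a x = 0} ⊆ {x | x ∈ gen G ∧ dot u x = 0} := by
    rintro x ⟨hx, hdx⟩; exact ⟨hx, hsub x hx hdx⟩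
  have hFF' : F ⊆ cface G u := by rw [hFa, cface, cface]; exact convexHull_mono hWW
  -- vector spans
  have hvsF : vectorSpan ℝ F = vectorSpan ℝ {x | x ∈ gen G ∧ dot a x = 0} := by
    rw [hFa, cface, vectorSpan_convexHull]
  have hvsU : vectorSpan ℝ (cface G u) = vectorSpan ℝ {x | x ∈ gen G ∧ dot u x = 0} := by
    rw [cface, vectorSpan_convexHull]
  have hvsP : vectorSpan ℝ (convexHull ℝ (gen G)) = vectorSpan ℝ (gen G) :=
    vectorSpan_convexHull _
  have hUP : vectorSpan ℝ (cface G u) ≤ vectorSpan ℝ (gen G) := by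
    rw [hvsU]; exact vectorSpan_mono ℝ (sep_subset _ _)
  have hPd : Module.finrank ℝ (vectorSpan ℝ (gen G)) = d := by
    rw [hd]; unfold polyDim; rw [hvsP]
  by_cases hk : Module.finrank ℝ (vectorSpan ℝ (cface G u)) = d
  · -- impossible case: the face would be everything
    exfalso
    have heq : vectorSpan ℝ (cface G u) = vectorSpan ℝ (gen G) :=
      Submodule.eq_of_le_of_finrank_le hUP (by rw [hPd, hk])
    have hker : vectorSpan ℝ (gen G) ≤ LinearMap.ker (dmap u) := by
      rw [← heq, hvsU]
      exact vectorSpan_le_ker u _ (fun x hx => hx.2)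
    obtain ⟨x0, hx0, hx0nz⟩ := hnz
    -- dot u is constant (= dot u x0 ≠ 0) on gen, so the face set is empty
    have hconst : ∀ x ∈ gen G, dot u x = dot u x0 := by
      intro x hx
      have : x -ᵥ x0 ∈ vectorSpan ℝ (gen G) := vsub_mem_vectorSpan ℝ hx hx0
      have h0 : dmap u (x - x0) = 0 := hker this
      rw [map_sub, dmap_apply, dmap_apply] at h0
      linarith
    have hWempty : {x | x ∈ gen G ∧ dot u x = 0} = ∅ := by
      ext x; simp only [mem_setOf_eq, mem_empty_iff_false, iff_false]
      rintro ⟨hx, h0⟩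
      rw [hconst x hx] at h0
      exact hx0nz h0
    obtain ⟨y, hy⟩ := hne
    have : y ∈ cface G u := hFF' hy
    rw [cface, hWempty, convexHull_empty] at this
    exact this
  · -- main case: finrank ≤ d - 1, spans coincide
    have hkle : Module.finrank ℝ (vectorSpan ℝ (cface G u)) ≤ d - 1 := by
      have : Module.finrank ℝ (vectorSpan ℝ (cface G u)) ≤ d := by
        rw [← hPd]; exact Submodule.finrank_mono hUP
      omega
    have hFU : vectorSpan ℝ F ≤ vectorSpan ℝ (cface G u) := vectorSpan_mono ℝ hFF'
    have heq : vectorSpan ℝ F = vectorSpan ℝ (cface G u) := by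
      apply Submodule.eq_of_le_of_finrank_le hFU
      have : Module.finrank ℝ (vectorSpan ℝ F) = d - 1 := hdim
      omega
    -- affine spans coincide
    obtain ⟨x0, hx0⟩ := hne
    have haff : affineSpan ℝ F = affineSpan ℝ (cface G u) := by
      apply AffineSubspace.ext_of_direction_eq
      · rw [direction_affineSpan, direction_affineSpan, heq]
      · exact ⟨x0, subset_affineSpan ℝ _ hx0, subset_affineSpan ℝ _ (hFF' hx0)⟩
    -- a vanishes on F
    have hFa0 : ∀ y ∈ F, dot a y = 0 := by
      intro y hy
      rw [hFa, cface] at hy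
      have hsubz : convexHull ℝ {x | x ∈ gen G ∧ dot a x = 0} ⊆ {y | dmap a y = 0} := by
        apply convexHull_min
        · rintro x ⟨_, h0⟩; rw [mem_setOf_eq, dmap_apply]; exact h0
        · exact convex_hyperplane ⟨fun p q => map_add _ p q, fun c p => map_smul _ c p⟩ 0
      have := hsubz hy
      rwa [mem_setOf_eq, dmap_apply] at this
    -- dot a vanishes on cface G u, hence its generators are in W_a
    have hWu_sub : {x | x ∈ gen G ∧ dot u x = 0} ⊆ {x | x ∈ gen G ∧ dot a x = 0} := by
      rintro x ⟨hx, hdx⟩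
      refine ⟨hx, ?_⟩
      have hxmem : x ∈ affineSpan ℝ F := by
        rw [haff]
        exact subset_affineSpan ℝ _ (subset_convexHull ℝ _ ⟨hx, hdx⟩)
      have hx0mem : x0 ∈ affineSpan ℝ F := subset_affineSpan ℝ _ hx0
      have hdir : x -ᵥ x0 ∈ (affineSpan ℝ F).direction :=
        AffineSubspace.vsub_mem_direction hxmem hx0mem
      rw [direction_affineSpan] at hdir
      have hkera : vectorSpan ℝ F ≤ LinearMap.ker (dmap a) := by
        rw [hvsF]
        exact vectorSpan_le_ker a _ (fun z hz => hz.2)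
      have h0 : dmap a (x - x0) = 0 := hkera hdir
      rw [map_sub, dmap_apply, dmap_apply] at h0
      have := hFa0 x0 hx0
      linarith
    apply Subset.antisymm hFF'
    rw [hFa, cface, cface]
    exact convexHull_mono hWu_sub
lemma dot_comm (u v : Fin n → ℝ) : dot u v = dot v u := by
  simp [dot, mul_comm]

/-- the alternating space L₀ -/
def IsAlt (G : SimpleGraph (Fin n)) (z : Fin n → ℝ) : Prop := ∀ i j, G.Adj i j → z i + z j = 0

def altSub (G : SimpleGraph (Fin n)) : Submodule ℝ (Fin n → ℝ) where
  carrier := {z | IsAlt G z}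
  add_mem' := by
    intro a b ha hb i j hij
    have := ha i j hij; have := hb i j hij
    simp only [Pi.add_apply]; linarith
  zero_mem' := by intro i j hij; simp
  smul_mem' := by
    intro c a ha i j hij
    have h := ha i j hij
    simp only [Pi.smul_apply, smul_eq_mul]
    linear_combination c * h

lemma mem_altSub_iff (G : SimpleGraph (Fin n)) (z : Fin n → ℝ) :
    z ∈ altSub G ↔ IsAlt G z := Iff.rfl

lemma isAlt_iff_dot (G : SimpleGraph (Fin n)) (z : Fin n → ℝ) :
    IsAlt G z ↔ ∀ x ∈ gen G, dot z x = 0 := by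
  constructor
  · rintro h x ⟨i, j, hij, rfl⟩; rw [dot_ev]; exact h i j hij
  · intro h i j hij
    have := h (ev i j) ⟨i, j, hij, rfl⟩
    rwa [dot_ev] at this

/-- propagation of |z| along the graph -/
lemma abs_const_of_alt {G : SimpleGraph (Fin n)} (hconn : G.Connected)
    {z : Fin n → ℝ} (hz : IsAlt G z) (i j : Fin n) : |z i| = |z j| := by
  suffices H : ∀ (a b : Fin n) (w : G.Walk a b), |z a| = |z b| by
    obtain ⟨w⟩ := hconn.preconnected i j
    exact H i j w
  intro a b w
  induction w with
  | nil => rfl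
  | @cons a c b hadj p ih =>
    have hz' : z a = - z c := by have := hz a c hadj; linarith
    rw [hz', abs_neg, ih]

/-- duality: finrank of span of gen plus finrank of altSub is n -/
lemma duality (G : SimpleGraph (Fin n)) :
    Module.finrank ℝ (Submodule.span ℝ (gen G)) + Module.finrank ℝ (altSub G) = n := by
  -- transfer to EuclideanSpace
  set e : (Fin n → ℝ) ≃ₗ[ℝ] EuclideanSpace ℝ (Fin n) :=
    (WithLp.linearEquiv 2 ℝ (Fin n → ℝ)).symm with he
  have hinner : ∀ u v : Fin n → ℝ, (inner ℝ (e u) (e v) : ℝ) = dot u v := by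
    intro u v
    rw [PiLp.inner_apply]
    simp only [RCLike.inner_apply, conj_trivial, he, WithLp.linearEquiv_symm_apply, dot]
    exact Finset.sum_congr rfl (fun i _ => mul_comm _ _)
  set M : Submodule ℝ (EuclideanSpace ℝ (Fin n)) := (Submodule.span ℝ (gen G)).map (e : (Fin n → ℝ) →ₗ[ℝ] EuclideanSpace ℝ (Fin n)) with hM
  have h1 : Module.finrank ℝ (Submodule.span ℝ (gen G)) = Module.finrank ℝ M :=
    (LinearEquiv.finrank_map_eq e _).symm
  have h2 : (altSub G).map (e : (Fin n → ℝ) →ₗ[ℝ] EuclideanSpace ℝ (Fin n)) = Mᗮ := by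
    ext y
    simp only [Submodule.mem_map, Submodule.mem_orthogonal]
    constructor
    · rintro ⟨z, hz, rfl⟩ v hv
      rw [hM] at hv
      obtain ⟨v', hv', rfl⟩ := hv
      -- v' ∈ span gen
      have : ∀ u ∈ Submodule.span ℝ (gen G), dot u z = 0 := by
        intro u hu
        induction hu using Submodule.span_induction with
        | mem x hx =>
          rw [dot_comm]
          exact (isAlt_iff_dot G z).1 hz x hx
        | zero => simp [dot]
        | add x y _ _ hx hy =>
          have : dot (x + y) z = dot x z + dot y z := by
            simp [dot, add_mul, Finset.sum_add_distrib]
          rw [this, hx, hy]; ring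
        | smul c x _ hx =>
          have : dot (c • x) z = c * dot x z := by
            simp [dot, Finset.mul_sum, mul_assoc]
          rw [this, hx]; ring
      rw [LinearEquiv.coe_coe, hinner]
      exact this v' hv'
    · intro hy
      refine ⟨e.symm y, ?_, by simp⟩
      rw [mem_altSub_iff, isAlt_iff_dot]
      intro x hx
      have hxmem : e x ∈ M := by
        rw [hM]; exact ⟨x, Submodule.subset_span hx, rfl⟩
      have h2' : (inner ℝ (e x) y : ℝ) = 0 := hy (e x) hxmem
      have h3' : dot x (e.symm y) = (inner ℝ (e x) (e (e.symm y)) : ℝ) := (hinner _ _).symm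
      rw [dot_comm, h3', LinearEquiv.apply_symm_apply]
      exact h2'
  have h3 : Module.finrank ℝ (altSub G) = Module.finrank ℝ Mᗮ := by
    rw [← h2]; exact (LinearEquiv.finrank_map_eq e _).symm
  rw [h1, h3, Submodule.finrank_add_finrank_orthogonal]
  simp [finrank_euclideanSpace]

/-- all generators have coordinate sum 2 -/
lemma dot_one_gen (x : Fin n → ℝ) (G : SimpleGraph (Fin n)) (hx : x ∈ gen G) :
    dot (fun _ => (1:ℝ)) x = 2 := by
  obtain ⟨i, j, hij, rfl⟩ := hx
  rw [dot_ev]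
  norm_num

/-- rank shift: span of gen has rank = vectorSpan + 1 -/
lemma rank_shift (G : SimpleGraph (Fin n)) (hgne : (gen G).Nonempty) :
    Module.finrank ℝ (Submodule.span ℝ (gen G)) =
      Module.finrank ℝ (vectorSpan ℝ (gen G)) + 1 := by
  obtain ⟨x0, hx0⟩ := hgne
  have hx0ne : x0 ≠ 0 := by
    obtain ⟨i, j, hij, rfl⟩ := hx0
    exact ev_ne_zero hij.ne
  have hsum : ∀ v ∈ vectorSpan ℝ (gen G), dot (fun _ => (1:ℝ)) v = 0 := by
    intro v hv
    rw [vectorSpan_def] at hv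
    induction hv using Submodule.span_induction with
    | mem x hx =>
      obtain ⟨p, hp, q, hq, rfl⟩ := hx
      have h1 := dot_one_gen p G hp
      have h2 := dot_one_gen q G hq
      have : dot (fun _ => (1:ℝ)) (p -ᵥ q) = dot (fun _ => (1:ℝ)) p - dot (fun _ => (1:ℝ)) q := by
        simp [dot, vsub_eq_sub, mul_sub, Finset.sum_sub_distrib]
      rw [this, h1, h2]; ring
    | zero => simp [dot]
    | add x y _ _ hx hy =>
      have : dot (fun _ => (1:ℝ)) (x + y) = dot (fun _ => (1:ℝ)) x + dot (fun _ => (1:ℝ)) y := by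
        simp [dot, mul_add, Finset.sum_add_distrib]
      rw [this, hx, hy]; ring
    | smul c x _ hx =>
      have : dot (fun _ => (1:ℝ)) (c • x) = c * dot (fun _ => (1:ℝ)) x := by
        simp [dot, Finset.mul_sum, mul_assoc]
      rw [this, hx]; ring
  have hspan : Submodule.span ℝ (gen G) = vectorSpan ℝ (gen G) ⊔ Submodule.span ℝ {x0} := by
    apply le_antisymm
    · rw [Submodule.span_le]
      intro x hx
      have : x = (x -ᵥ x0) + x0 := by simp [vsub_eq_sub]
      rw [SetLike.mem_coe, this]
      apply Submodule.add_mem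
      · exact Submodule.mem_sup_left (vsub_mem_vectorSpan ℝ hx hx0)
      · exact Submodule.mem_sup_right (Submodule.subset_span rfl)
    · apply sup_le
      · rw [vectorSpan_def, Submodule.span_le]
        rintro v ⟨p, hp, q, hq, rfl⟩
        exact Submodule.sub_mem _ (Submodule.subset_span hp) (Submodule.subset_span hq)
      · rw [Submodule.span_le, singleton_subset_iff]
        exact Submodule.subset_span hx0
  have hdisj : vectorSpan ℝ (gen G) ⊓ Submodule.span ℝ {x0} = ⊥ := by
    rw [eq_bot_iff]
    intro v hv
    rw [Submodule.mem_inf] at hv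
    obtain ⟨hv1, hv2⟩ := hv
    rw [Submodule.mem_span_singleton] at hv2
    obtain ⟨c, rfl⟩ := hv2
    have h0 := hsum _ hv1
    have hx02 : dot (fun _ => (1:ℝ)) x0 = 2 := dot_one_gen x0 G hx0
    have : dot (fun _ => (1:ℝ)) (c • x0) = c * dot (fun _ => (1:ℝ)) x0 := by
      simp [dot, Finset.mul_sum, mul_assoc]
    rw [this, hx02] at h0
    have : c = 0 := by linarith
    simp [this]
  have := Submodule.finrank_sup_add_finrank_inf_eq (vectorSpan ℝ (gen G))
    (Submodule.span ℝ {x0})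
  rw [hdisj] at this
  rw [hspan]
  have h1 : Module.finrank ℝ (Submodule.span ℝ ({x0} : Set (Fin n → ℝ))) = 1 :=
    finrank_span_singleton hx0ne
  simp only [finrank_bot] at this
  omega
/-- every vertex has a neighbour -/
lemma exists_adj {G : SimpleGraph (Fin n)} (hconn : G.Connected) (hn : 2 ≤ n) (v : Fin n) :
    ∃ t, G.Adj v t := by
  have : Nontrivial (Fin n) := Fin.nontrivial_iff_two_le.2 hn
  obtain ⟨w, hw⟩ := exists_ne v
  obtain ⟨p⟩ := hconn.preconnected v w
  cases p with
  | nil => exact absurd rfl (Ne.symm hw)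
  | cons h q => exact ⟨_, h⟩

lemma gen_nonempty {G : SimpleGraph (Fin n)} (hconn : G.Connected) (hn : 2 ≤ n) :
    (gen G).Nonempty := by
  have : (0 : ℕ) < n := by omega
  obtain ⟨t, ht⟩ := exists_adj hconn hn ⟨0, this⟩
  exact ⟨ev _ t, _, t, ht, rfl⟩

/-- finrank of altSub ≤ 1 for connected graphs -/
lemma finrank_altSub_le (G : SimpleGraph (Fin n)) (hconn : G.Connected) (hn : 2 ≤ n) :
    Module.finrank ℝ (altSub G) ≤ 1 := by
  have hpos : (0 : ℕ) < n := by omega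
  set v0 : Fin n := ⟨0, hpos⟩
  set φ : altSub G →ₗ[ℝ] ℝ := {
    toFun := fun z => (z : Fin n → ℝ) v0
    map_add' := fun a b => rfl
    map_smul' := fun c a => rfl } with hφ
  have hinj : Function.Injective φ := by
    rw [injective_iff_map_eq_zero]
    intro z hz0
    have hz : IsAlt G (z : Fin n → ℝ) := (mem_altSub_iff G _).1 z.2
    have : ∀ i, |(z : Fin n → ℝ) i| = |(z : Fin n → ℝ) v0| := fun i =>
      abs_const_of_alt hconn hz i v0
    have hzv : (z : Fin n → ℝ) v0 = 0 := hz0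
    apply Subtype.ext
    funext i
    have := this i
    rw [hzv, abs_zero, abs_eq_zero] at this
    exact this
  calc Module.finrank ℝ (altSub G) ≤ Module.finrank ℝ ℝ :=
        LinearMap.finrank_le_finrank_of_injective hinj
    _ = 1 := Module.finrank_self ℝ

/-- master dimension lemma -/
lemma dim_master (G : SimpleGraph (Fin n)) (hconn : G.Connected) (hn : 2 ≤ n) :
    polyDim (convexHull ℝ (gen G)) + 1 + Module.finrank ℝ (altSub G) = n := by
  have h1 : polyDim (convexHull ℝ (gen G)) = Module.finrank ℝ (vectorSpan ℝ (gen G)) := by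
    unfold polyDim; rw [vectorSpan_convexHull]
  rw [h1, ← rank_shift G (gen_nonempty hconn hn), duality]
/-- vertex-type normal -/
def vvec (v : Fin n) : Fin n → ℝ := -Pi.single v 1

/-- neighbourhood of a finset -/
def nbhd (G : SimpleGraph (Fin n)) (S : Finset (Fin n)) : Finset (Fin n) :=
  Finset.univ.filter (fun k => ∃ s ∈ S, G.Adj s k)

lemma mem_nbhd (G : SimpleGraph (Fin n)) (S : Finset (Fin n)) (k : Fin n) :
    k ∈ nbhd G S ↔ ∃ s ∈ S, G.Adj s k := by simp [nbhd]

/-- cut-type normal -/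
def uvec (G : SimpleGraph (Fin n)) (S : Finset (Fin n)) : Fin n → ℝ :=
  fun k => if k ∈ S then 1 else if k ∈ nbhd G S then -1 else 0

lemma vvec_apply (v k : Fin n) : vvec v k = if k = v then -1 else 0 := by
  simp [vvec, Pi.single_apply]
  split_ifs <;> norm_num

/-- the core case analysis: either a vertex avoids all face edges, or
every vertex is covered; carries the needed auxiliary facts -/
lemma classify_core (G : SimpleGraph (Fin n)) (hconn : G.Connected) (hn : 2 ≤ n)
    {d : ℕ} (hd : d = polyDim (edgePolytope G)) (hd3 : 3 ≤ d)
    {F : Set (Fin n → ℝ)} (hex : IsExposed ℝ (edgePolytope G) F) (hne : F.Nonempty)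
    (hdim : polyDim F = d - 1) :
    (∃ v, F = cface G (vvec v)) ∨
    (∃ a : Fin n → ℝ, (∀ i j, G.Adj i j → a i + a j ≤ 0) ∧ F = cface G a ∧
      (∀ v, ∃ j, G.Adj v j ∧ a v + a j = 0) ∧
      ¬(∀ i j, G.Adj i j → a i + a j = 0)) := by
  have hd' : d = polyDim (convexHull ℝ (gen G)) := hd
  obtain ⟨a, hvalid, hFa⟩ := exists_normal G (gen_nonempty hconn hn) hex hne
  have hvalid' : ∀ i j, G.Adj i j → a i + a j ≤ 0 := by
    intro i j hij
    have := hvalid (ev i j) ⟨i, j, hij, rfl⟩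
    rwa [dot_ev] at this
  have hNotAll : ¬(∀ i j, G.Adj i j → a i + a j = 0) := by
    intro hall
    have hWgen : {x | x ∈ gen G ∧ dot a x = 0} = gen G := by
      ext x
      simp only [mem_setOf_eq, and_iff_left_iff_imp]
      rintro ⟨i, j, hij, rfl⟩
      rw [dot_ev]; exact hall i j hij
    have hFP : F = convexHull ℝ (gen G) := by rw [hFa, cface, hWgen]
    have : polyDim F = d := by rw [hFP, ← hd']
    omega
  by_cases hiso : ∃ v, ∀ i j, G.Adj i j → a i + a j = 0 → v ≠ i ∧ v ≠ j
  · left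
    obtain ⟨v, hv⟩ := hiso
    refine ⟨v, face_eq_of_valid G hd' (by omega) hFa hne hdim ?_ ?_ ?_⟩
    · rintro x ⟨i, j, hij, rfl⟩
      rw [dot_ev, vvec_apply, vvec_apply]
      split_ifs <;> norm_num
    · rintro x ⟨i, j, hij, rfl⟩ hx0
      rw [dot_ev] at hx0 ⊢
      obtain ⟨h1, h2⟩ := hv i j hij hx0
      rw [vvec_apply, vvec_apply, if_neg (Ne.symm h1), if_neg (Ne.symm h2)]
      norm_num
    · obtain ⟨t, ht⟩ := exists_adj hconn hn v
      refine ⟨ev v t, ⟨v, t, ht, rfl⟩, ?_⟩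
      rw [dot_ev, vvec_apply, vvec_apply, if_pos rfl, if_neg (Ne.symm ht.ne)]
      norm_num
  · right
    push_neg at hiso
    refine ⟨a, hvalid', hFa, ?_, hNotAll⟩
    intro v
    obtain ⟨i, j, hij, hsum, hvij⟩ := hiso v
    by_cases hvi : v = i
    · exact ⟨j, hvi ▸ hij, hvi ▸ hsum⟩
    · have hvj : v = j := hvij hvi
      subst hvj
      exact ⟨i, hij.symm, by linarith⟩

/-- classification, non-bipartite case -/
lemma classify_nonbip (G : SimpleGraph (Fin n)) (hconn : G.Connected) (hn : 2 ≤ n)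
    {d : ℕ} (hd : d = polyDim (edgePolytope G)) (hd3 : 3 ≤ d)
    (hnb : ∀ z, IsAlt G z → z = 0)
    {F : Set (Fin n → ℝ)} (hex : IsExposed ℝ (edgePolytope G) F) (hne : F.Nonempty)
    (hdim : polyDim F = d - 1) :
    (∃ v, F = cface G (vvec v)) ∨
    (∃ S : Finset (Fin n), S.Nonempty ∧ (∀ i ∈ S, ∀ j ∈ S, ¬G.Adj i j) ∧
      F = cface G (uvec G S)) := by
  rcases classify_core G hconn hn hd hd3 hex hne hdim with h | ⟨a, hvalid, hFa, hcov, hNotAll⟩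
  · exact Or.inl h
  right
  have hd' : d = polyDim (convexHull ℝ (gen G)) := hd
  -- maximum of a
  have huniv_ne : (Finset.univ : Finset (Fin n)).Nonempty := by
    have : (0:ℕ) < n := by omega
    exact ⟨⟨0, this⟩, Finset.mem_univ _⟩
  obtain ⟨v, -, hvmax⟩ := Finset.exists_max_image Finset.univ (fun i => a i) huniv_ne
  have hvmax' : ∀ b, a b ≤ a v := fun b => hvmax b (Finset.mem_univ b)
  -- M > 0
  have hMpos : 0 < a v := by
    by_contra hM
    push_neg at hM
    have hzero : ∀ k, a k = 0 := by
      intro k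
      obtain ⟨j, hadj, hsum⟩ := hcov k
      have h1 : a k ≤ 0 := (hvmax' k).trans hM
      have h2 : a j ≤ 0 := (hvmax' j).trans hM
      linarith
    apply hNotAll
    intro i j _
    rw [hzero i, hzero j]; ring
  set S : Finset (Fin n) := Finset.univ.filter (fun i => a i = a v) with hS
  have hvS : v ∈ S := by simp [hS]
  have hmemS : ∀ i, i ∈ S ↔ a i = a v := by intro i; simp [hS]
  have hSindep : ∀ i ∈ S, ∀ j ∈ S, ¬G.Adj i j := by
    intro i hi j hj hadj
    rw [hmemS] at hi hj
    have := hvalid i j hadj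
    rw [hi, hj] at this
    linarith
  refine ⟨S, ⟨v, hvS⟩, hSindep, ?_⟩
  apply face_eq_of_valid G hd' (by omega) hFa hne hdim
  · -- validity of uvec
    rintro x ⟨i, j, hij, rfl⟩
    rw [dot_ev]
    by_cases hi : i ∈ S <;> by_cases hj : j ∈ S
    · exact absurd hij (hSindep i hi j hj)
    · have hjn : j ∈ nbhd G S := (mem_nbhd G S j).2 ⟨i, hi, hij⟩
      simp only [uvec, if_pos hi, if_neg hj, if_pos hjn]
      norm_num
    · have hin : i ∈ nbhd G S := (mem_nbhd G S i).2 ⟨j, hj, hij.symm⟩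
      simp only [uvec, if_pos hj, if_neg hi, if_pos hin]
      norm_num
    · simp only [uvec, if_neg hi, if_neg hj]
      split_ifs <;> norm_num
  · -- W_a ⊆ W_u
    rintro x ⟨i, j, hij, rfl⟩ h0
    rw [dot_ev] at h0 ⊢
    by_cases hi : i ∈ S
    · have hai : a i = a v := (hmemS i).1 hi
      have haj : a j = -(a v) := by linarith
      have hj : j ∉ S := by
        rw [hmemS]; intro h; rw [h] at haj; linarith
      have hjn : j ∈ nbhd G S := (mem_nbhd G S j).2 ⟨i, hi, hij⟩
      simp only [uvec, if_pos hi, if_neg hj, if_pos hjn]; ring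
    · by_cases hj : j ∈ S
      · have haj : a j = a v := (hmemS j).1 hj
        have hai : a i = -(a v) := by linarith
        have hin : i ∈ nbhd G S := (mem_nbhd G S i).2 ⟨j, hj, hij.symm⟩
        simp only [uvec, if_pos hj, if_neg hi, if_pos hin]; ring
      · have hin : i ∉ nbhd G S := by
          rw [mem_nbhd]
          rintro ⟨s, hs, hadj⟩
          have has : a s = a v := (hmemS s).1 hs
          have := hvalid s i hadj
          have hai : a i ≤ -(a v) := by linarith
          have haj : a j ≥ a v := by linarith
          exact hj ((hmemS j).2 (le_antisymm (hvmax' j) haj))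
        have hjn : j ∉ nbhd G S := by
          rw [mem_nbhd]
          rintro ⟨s, hs, hadj⟩
          have has : a s = a v := (hmemS s).1 hs
          have := hvalid s j hadj
          have haj : a j ≤ -(a v) := by linarith
          have hai : a i ≥ a v := by linarith
          exact hi ((hmemS i).2 (le_antisymm (hvmax' i) hai))
        simp only [uvec, if_neg hi, if_neg hj, if_neg hin, if_neg hjn]; ring
  · -- not all zero
    by_contra h
    push_neg at h
    have halt : IsAlt G (uvec G S) := by
      intro i j hij
      have := h (ev i j) ⟨i, j, hij, rfl⟩
      rw [dot_ev] at this
      linarith [this]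
    have := hnb _ halt
    have hv1 : uvec G S v = 1 := by simp only [uvec, if_pos hvS]
    rw [this] at hv1
    simp at hv1

/-- classification, bipartite case; `z` is a nonvanishing alternating vector and facets
are classified by subsets of the positive side of `z`. -/
lemma classify_bip (G : SimpleGraph (Fin n)) (hconn : G.Connected) (hn : 2 ≤ n)
    {d : ℕ} (hd : d = polyDim (edgePolytope G)) (hd3 : 3 ≤ d)
    {z : Fin n → ℝ} (hzalt : IsAlt G z) (hz0 : ∀ i, z i ≠ 0)
    {F : Set (Fin n → ℝ)} (hex : IsExposed ℝ (edgePolytope G) F) (hne : F.Nonempty)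
    (hdim : polyDim F = d - 1) :
    (∃ v, F = cface G (vvec v)) ∨
    (∃ S : Finset (Fin n), S.Nonempty ∧ S ⊆ Finset.univ.filter (fun i => 0 < z i) ∧
      F = cface G (uvec G S)) := by
  rcases classify_core G hconn hn hd hd3 hex hne hdim with h | ⟨a, hvalid, hFa, hcov, hNotAll⟩
  · exact Or.inl h
  right
  have hd' : d = polyDim (convexHull ℝ (gen G)) := hd
  set A : Finset (Fin n) := Finset.univ.filter (fun i => 0 < z i) with hA
  have hmemA : ∀ i, i ∈ A ↔ 0 < z i := by intro i; simp [hA]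
  have hcross : ∀ i j, G.Adj i j → (0 < z i ↔ z j < 0) := by
    intro i j hij
    have := hzalt i j hij
    constructor <;> intro h <;> linarith
  -- A is nonempty
  have hAne : A.Nonempty := by
    obtain ⟨e0, he0⟩ := gen_nonempty hconn hn
    obtain ⟨i, j, hij, -⟩ := he0
    rcases lt_or_gt_of_ne (hz0 i) with h | h
    · have : 0 < z j := by have := hzalt i j hij; linarith
      exact ⟨j, (hmemA j).2 this⟩
    · exact ⟨i, (hmemA i).2 h⟩
  obtain ⟨v, hvA, hvmax⟩ := Finset.exists_max_image A (fun i => a i) hAne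
  have hvmax' : ∀ b ∈ A, a b ≤ a v := fun b hb => hvmax b hb
  -- case: a is constant on A → contradiction with hNotAll
  by_cases hconst : ∀ α ∈ A, a α = a v
  · exfalso
    apply hNotAll
    intro i j hij
    -- one endpoint is in A, the other's partner gives value -a v
    have key : ∀ p q, G.Adj p q → 0 < z p → a p + a q = 0 := by
      intro p q hpq hzp
      have hpA : p ∈ A := (hmemA p).2 hzp
      have hap : a p = a v := hconst p hpA
      have hzq : z q < 0 := (hcross p q hpq).1 hzp
      obtain ⟨k, hqk, hsum⟩ := hcov q
      have hzk : 0 < z k := by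
        have := hzalt q k hqk; linarith
      have hkA : k ∈ A := (hmemA k).2 hzk
      have hak : a k = a v := hconst k hkA
      have haq : a q = -(a v) := by rw [← hak]; linarith
      rw [hap, haq]; ring
    rcases lt_or_gt_of_ne (hz0 i) with h | h
    · have : 0 < z j := by have := hzalt i j hij; linarith
      have := key j i hij.symm this
      linarith
    · exact key i j hij h
  -- main case
  push_neg at hconst
  obtain ⟨α, hαA, hαne⟩ := hconst
  set S : Finset (Fin n) := A.filter (fun i => a i = a v) with hS
  have hmemS : ∀ i, i ∈ S ↔ (i ∈ A ∧ a i = a v) := by intro i; simp [hS]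
  have hvS : v ∈ S := (hmemS v).2 ⟨hvA, rfl⟩
  have hSsubA : S ⊆ A := Finset.filter_subset _ _
  have hSnA : ∀ s ∈ S, ∀ k, G.Adj s k → k ∉ A := by
    intro s hs k hadj hk
    have h1 : 0 < z s := (hmemA s).1 (hSsubA hs)
    have h2 : 0 < z k := (hmemA k).1 hk
    have := hzalt s k hadj
    linarith
  have hSindep : ∀ i ∈ S, ∀ j ∈ S, ¬G.Adj i j := by
    intro i hi j hj hadj
    exact hSnA i hi j hadj (hSsubA hj)
  refine ⟨S, ⟨v, hvS⟩, hSsubA, ?_⟩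
  apply face_eq_of_valid G hd' (by omega) hFa hne hdim
  · -- validity of uvec (same as before)
    rintro x ⟨i, j, hij, rfl⟩
    rw [dot_ev]
    by_cases hi : i ∈ S <;> by_cases hj : j ∈ S
    · exact absurd hij (hSindep i hi j hj)
    · have hjn : j ∈ nbhd G S := (mem_nbhd G S j).2 ⟨i, hi, hij⟩
      simp only [uvec, if_pos hi, if_neg hj, if_pos hjn]
      norm_num
    · have hin : i ∈ nbhd G S := (mem_nbhd G S i).2 ⟨j, hj, hij.symm⟩
      simp only [uvec, if_pos hj, if_neg hi, if_pos hin]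
      norm_num
    · simp only [uvec, if_neg hi, if_neg hj]
      split_ifs <;> norm_num
  · -- W_a ⊆ W_u
    rintro x ⟨i, j, hij, rfl⟩ h0
    rw [dot_ev] at h0 ⊢
    by_cases hi : i ∈ S
    · have hj : j ∉ S := fun hj => hSnA i hi j hij (hSsubA hj)
      have hjn : j ∈ nbhd G S := (mem_nbhd G S j).2 ⟨i, hi, hij⟩
      simp only [uvec, if_pos hi, if_neg hj, if_pos hjn]; ring
    · by_cases hj : j ∈ S
      · have hi' : i ∉ S := hi
        have hin : i ∈ nbhd G S := (mem_nbhd G S i).2 ⟨j, hj, hij.symm⟩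
        simp only [uvec, if_pos hj, if_neg hi, if_pos hin]; ring
      · have hin : i ∉ nbhd G S := by
          rw [mem_nbhd]
          rintro ⟨s, hs, hadj⟩
          -- s ∈ S ⊆ A, s ~ i, so z i < 0; then z j > 0, j ∈ A
          have hzs : 0 < z s := (hmemA s).1 (hSsubA hs)
          have hzi : z i < 0 := (hcross s i hadj).1 hzs
          have hzj : 0 < z j := by have := hzalt i j hij; linarith
          have hjA : j ∈ A := (hmemA j).2 hzj
          have has : a s = a v := ((hmemS s).1 hs).2
          have := hvalid s i hadj
          have hai : a i ≤ -(a v) := by linarith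
          have haj : a j ≥ a v := by linarith
          exact hj ((hmemS j).2 ⟨hjA, le_antisymm (hvmax' j hjA) haj⟩)
        have hjn : j ∉ nbhd G S := by
          rw [mem_nbhd]
          rintro ⟨s, hs, hadj⟩
          have hzs : 0 < z s := (hmemA s).1 (hSsubA hs)
          have hzj : z j < 0 := (hcross s j hadj).1 hzs
          have hzi : 0 < z i := by have := hzalt i j hij; linarith
          have hiA : i ∈ A := (hmemA i).2 hzi
          have has : a s = a v := ((hmemS s).1 hs).2
          have := hvalid s j hadj
          have haj : a j ≤ -(a v) := by linarith
          have hai : a i ≥ a v := by linarith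
          exact hi ((hmemS i).2 ⟨hiA, le_antisymm (hvmax' i hiA) hai⟩)
        simp only [uvec, if_neg hi, if_neg hj, if_neg hin, if_neg hjn]; ring
  · -- not all zero : else uvec would be alternating, but it has |values| 1 and 0
    by_contra h
    push_neg at h
    have halt : IsAlt G (uvec G S) := by
      intro i j hij
      have := h (ev i j) ⟨i, j, hij, rfl⟩
      rw [dot_ev] at this
      linarith [this]
    have habs := abs_const_of_alt hconn halt v α
    have hv1 : uvec G S v = 1 := by simp only [uvec, if_pos hvS]
    have hα0 : uvec G S α = 0 := by
      have hα1 : α ∉ S := by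
        rw [hmemS]; rintro ⟨-, h'⟩; exact hαne h'
      have hα2 : α ∉ nbhd G S := by
        rw [mem_nbhd]
        rintro ⟨s, hs, hadj⟩
        exact hSnA s hs α hadj hαA
      simp only [uvec, if_neg hα1, if_neg hα2]
    rw [hv1, hα0] at habs
    norm_num at habs
/-- the number of vertex-type faces is at most n -/
lemma count_vtype (G : SimpleGraph (Fin n)) :
    ({F : Set (Fin n → ℝ) | ∃ v, F = cface G (vvec v)}).ncard ≤ n := by
  have himg : {F : Set (Fin n → ℝ) | ∃ v, F = cface G (vvec v)} =
      (fun v => cface G (vvec v)) '' Set.univ := by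
    ext F
    simp only [mem_setOf_eq, Set.image_univ, Set.mem_range]
    exact ⟨fun ⟨v, h⟩ => ⟨v, h.symm⟩, fun ⟨v, h⟩ => ⟨v, h.symm⟩⟩
  rw [himg]
  calc ((fun v => cface G (vvec v)) '' Set.univ).ncard ≤ (Set.univ : Set (Fin n)).ncard :=
        Set.ncard_image_le (Set.toFinite _)
    _ = n := by rw [Set.ncard_univ]; simp

/-- counting in the non-bipartite case : at most `2^(n-1) - 1` cut faces. -/
lemma count_cut_nonbip (G : SimpleGraph (Fin n)) (hconn : G.Connected) (hn : 2 ≤ n)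
    (hnb : ∀ z, IsAlt G z → z = 0) :
    ({F : Set (Fin n → ℝ) | ∃ S : Finset (Fin n), (S.Nonempty ∧
      (∀ i ∈ S, ∀ j ∈ S, ¬G.Adj i j)) ∧ F = cface G (uvec G S)}).ncard ≤ 2 ^ (n - 1) - 1 := by
  have hpos : (0:ℕ) < n := by omega
  set v0 : Fin n := ⟨0, hpos⟩ with hv0
  set Pred : Set (Fin n → ℝ) → Prop := fun F => ∃ S : Finset (Fin n), (S.Nonempty ∧
      (∀ i ∈ S, ∀ j ∈ S, ¬G.Adj i j)) ∧ F = cface G (uvec G S) with hPred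
  set sel : Set (Fin n → ℝ) → Finset (Fin n) := fun F =>
    if h : Pred F then (if v0 ∈ h.choose then Finset.univ \ h.choose else h.choose)
    else ∅ with hsel
  set T : Set (Finset (Fin n)) := {T | v0 ∉ T ∧ T.Nonempty} with hT
  have hTcard : T.ncard = 2 ^ (n - 1) - 1 := by
    have : T = ↑(((Finset.univ.erase v0).powerset).erase ∅) := by
      ext t
      simp only [hT, mem_setOf_eq, Finset.coe_erase, Set.mem_diff, Finset.mem_coe,
        Finset.mem_powerset, Set.mem_singleton_iff]
      rw [Finset.subset_erase]
      constructor
      · rintro ⟨h1, h2⟩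
        exact ⟨⟨Finset.subset_univ t, h1⟩, Finset.nonempty_iff_ne_empty.1 h2⟩
      · rintro ⟨⟨-, h1⟩, h2⟩
        exact ⟨h1, Finset.nonempty_iff_ne_empty.2 h2⟩
    rw [this, Set.ncard_coe_finset, Finset.card_erase_of_mem (Finset.empty_mem_powerset _),
      Finset.card_powerset, Finset.card_erase_of_mem (Finset.mem_univ _), Finset.card_univ,
      Fintype.card_fin]
  rw [← hTcard]
  apply Set.ncard_le_ncard_of_injOn sel
  · -- maps to T
    intro F hF
    have hPF : Pred F := hF
    have hspec := hPF.choose_spec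
    set S := hPF.choose with hSdef
    obtain ⟨⟨hSne, hSind⟩, hFS⟩ := hspec
    rw [hsel]
    simp only [dif_pos hPF]
    by_cases hv : v0 ∈ S
    · rw [if_pos hv]
      constructor
      · simp only [Finset.mem_sdiff, Finset.mem_univ, true_and, not_not]
        exact hv
      · -- univ \ S nonempty, else S = univ and S independent, but edges exist
        rw [Finset.sdiff_nonempty]
        intro hsub
        obtain ⟨t, ht⟩ := exists_adj hconn hn v0
        exact hSind v0 (hsub (Finset.mem_univ v0)) t (hsub (Finset.mem_univ t)) ht
    · rw [if_neg hv]
      exact ⟨hv, hSne⟩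
  · -- injective
    intro F1 hF1 F2 hF2 heq
    have hP1 : Pred F1 := hF1
    have hP2 : Pred F2 := hF2
    obtain ⟨⟨hne1, hind1⟩, hFS1⟩ := hP1.choose_spec
    obtain ⟨⟨hne2, hind2⟩, hFS2⟩ := hP2.choose_spec
    rw [hsel] at heq
    simp only [dif_pos hP1, dif_pos hP2] at heq
    -- the complement of an independent set cannot be an independent set (non-bipartite!)
    have hkey : ∀ S1 S2 : Finset (Fin n), S1.Nonempty → S2.Nonempty →
        (∀ i ∈ S1, ∀ j ∈ S1, ¬G.Adj i j) → (∀ i ∈ S2, ∀ j ∈ S2, ¬G.Adj i j) →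
        Finset.univ \ S1 = S2 → False := by
      intro S1 S2 hne1' hne2' hind1' hind2' hcompl
      have hz : IsAlt G (fun i => if i ∈ S1 then (1:ℝ) else -1) := by
        intro i j hij
        by_cases hi : i ∈ S1
        · have hj : j ∉ S1 := fun hj => hind1' i hi j hj hij
          show (if i ∈ S1 then (1:ℝ) else -1) + (if j ∈ S1 then (1:ℝ) else -1) = 0
          rw [if_pos hi, if_neg hj]; ring
        · have hiS2 : i ∈ S2 := by
            rw [← hcompl]; simp [hi]
          have hj : j ∈ S1 := by
            by_contra hj
            have hjS2 : j ∈ S2 := by rw [← hcompl]; simp [hj]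
            exact hind2' i hiS2 j hjS2 hij
          show (if i ∈ S1 then (1:ℝ) else -1) + (if j ∈ S1 then (1:ℝ) else -1) = 0
          rw [if_neg hi, if_pos hj]; ring
      have := hnb _ hz
      have h1 := congrFun this v0
      by_cases h : v0 ∈ S1 <;> simp [h] at h1
    by_cases h1 : v0 ∈ hP1.choose <;> by_cases h2 : v0 ∈ hP2.choose
    · rw [if_pos h1, if_pos h2] at heq
      have : hP1.choose = hP2.choose := by
        have := congrArg (fun t => Finset.univ \ t) heq
        simpa [Finset.sdiff_sdiff_self_left] using this
      rw [hFS1, hFS2, this]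
    · rw [if_pos h1, if_neg h2] at heq
      exact (hkey _ _ hne1 hne2 hind1 hind2 heq).elim
    · rw [if_neg h1, if_pos h2] at heq
      exact (hkey _ _ hne2 hne1 hind2 hind1 heq.symm).elim
    · rw [if_neg h1, if_neg h2] at heq
      rw [hFS1, hFS2, heq]

/-- counting of cut faces with S inside a fixed finset A -/
lemma count_cut_sub (G : SimpleGraph (Fin n)) (A : Finset (Fin n)) :
    ({F : Set (Fin n → ℝ) | ∃ S : Finset (Fin n), (S.Nonempty ∧ S ⊆ A) ∧
      F = cface G (uvec G S)}).ncard ≤ 2 ^ A.card - 1 := by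
  set Pred : Set (Fin n → ℝ) → Prop := fun F => ∃ S : Finset (Fin n), (S.Nonempty ∧ S ⊆ A) ∧
      F = cface G (uvec G S) with hPred
  set sel : Set (Fin n → ℝ) → Finset (Fin n) := fun F =>
    if h : Pred F then h.choose else ∅ with hsel
  set T : Set (Finset (Fin n)) := {T | T.Nonempty ∧ T ⊆ A} with hT
  have hTcard : T.ncard = 2 ^ A.card - 1 := by
    have : T = ↑((A.powerset).erase ∅) := by
      ext t
      simp only [hT, mem_setOf_eq, Finset.coe_erase, Set.mem_diff, Finset.mem_coe,
        Finset.mem_powerset, Set.mem_singleton_iff]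
      constructor
      · rintro ⟨h1, h2⟩
        exact ⟨h2, Finset.nonempty_iff_ne_empty.1 h1⟩
      · rintro ⟨h1, h2⟩
        exact ⟨Finset.nonempty_iff_ne_empty.2 h2, h1⟩
    rw [this, Set.ncard_coe_finset, Finset.card_erase_of_mem (Finset.empty_mem_powerset _),
      Finset.card_powerset]
  rw [← hTcard]
  apply Set.ncard_le_ncard_of_injOn sel
  · intro F hF
    have hPF : Pred F := hF
    obtain ⟨⟨hSne, hSsub⟩, hFS⟩ := hPF.choose_spec
    rw [hsel]
    simp only [dif_pos hPF]
    exact ⟨hSne, hSsub⟩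
  · intro F1 hF1 F2 hF2 heq
    have hP1 : Pred F1 := hF1
    have hP2 : Pred F2 := hF2
    obtain ⟨-, hFS1⟩ := hP1.choose_spec
    obtain ⟨-, hFS2⟩ := hP2.choose_spec
    rw [hsel] at heq
    simp only [dif_pos hP1, dif_pos hP2] at heq
    rw [hFS1, hFS2, heq]
lemma vtype_finite (G : SimpleGraph (Fin n)) :
    ({F : Set (Fin n → ℝ) | ∃ v, F = cface G (vvec v)}).Finite := by
  have : {F : Set (Fin n → ℝ) | ∃ v, F = cface G (vvec v)} ⊆
      (fun v => cface G (vvec v)) '' Set.univ := by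
    rintro F ⟨v, rfl⟩; exact ⟨v, trivial, rfl⟩
  exact ((Set.finite_univ).image _).subset this

lemma cut_finite (G : SimpleGraph (Fin n)) (Q : Finset (Fin n) → Prop) :
    ({F : Set (Fin n → ℝ) | ∃ S : Finset (Fin n), Q S ∧ F = cface G (uvec G S)}).Finite := by
  have : {F : Set (Fin n → ℝ) | ∃ S : Finset (Fin n), Q S ∧ F = cface G (uvec G S)} ⊆
      (fun S => cface G (uvec G S)) '' Set.univ := by
    rintro F ⟨S, -, rfl⟩; exact ⟨S, trivial, rfl⟩
  exact ((Set.finite_univ).image _).subset this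

/-- final counting, bipartite case -/
lemma final_bip (G : SimpleGraph (Fin n)) (hconn : G.Connected) (hn : 2 ≤ n)
    {d : ℕ} (hd : d = polyDim (edgePolytope G)) (hd3 : 3 ≤ d)
    {z : Fin n → ℝ} (hzalt : IsAlt G z) (hz0 : ∀ i, z i ≠ 0)
    (hm : 2 * (Finset.univ.filter (fun i => 0 < z i)).card ≤ n) (hn2 : n = d + 2) :
    faceCount (edgePolytope G) (d - 1) ≤ 2 ^ d + d := by
  set A := Finset.univ.filter (fun i => 0 < z i) with hA
  set m := A.card with hmdef
  set U1 := {F : Set (Fin n → ℝ) | ∃ v, F = cface G (vvec v)} with hU1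
  set U2 := {F : Set (Fin n → ℝ) | ∃ S : Finset (Fin n), (S.Nonempty ∧ S ⊆ A) ∧
      F = cface G (uvec G S)} with hU2
  have hsub : {F : Set (Fin n → ℝ) | IsExposed ℝ (edgePolytope G) F ∧ F.Nonempty ∧
      polyDim F = d - 1} ⊆ U1 ∪ U2 := by
    rintro F ⟨hex, hne, hdim⟩
    rcases classify_bip G hconn hn hd hd3 hzalt hz0 hex hne hdim with h | ⟨S, h1, h2, h3⟩
    · exact Or.inl h
    · exact Or.inr ⟨S, ⟨h1, h2⟩, h3⟩
  have hfin : (U1 ∪ U2).Finite := (vtype_finite G).union (cut_finite G _)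
  have hcount : faceCount (edgePolytope G) (d - 1) ≤ U1.ncard + U2.ncard := by
    calc faceCount (edgePolytope G) (d - 1) ≤ (U1 ∪ U2).ncard :=
          Set.ncard_le_ncard hsub hfin
      _ ≤ U1.ncard + U2.ncard := Set.ncard_union_le _ _
  have h1 : U1.ncard ≤ n := count_vtype G
  have h2 : U2.ncard ≤ 2 ^ m - 1 := count_cut_sub G A
  have hmd : m ≤ d - 1 := by omega
  have hp1 : 2 ^ m ≤ 2 ^ (d - 1) := Nat.pow_le_pow_right (by norm_num) hmd
  have hp2 : 2 ^ (d - 1) + 2 ^ (d - 1) = 2 ^ d := by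
    have hh : d = (d - 1) + 1 := by omega
    conv_rhs => rw [hh]
    rw [pow_succ]; ring
  have hp3 : 1 ≤ 2 ^ (d - 1) := Nat.one_le_two_pow
  omega

/-- final counting, non-bipartite case -/
lemma final_nonbip (G : SimpleGraph (Fin n)) (hconn : G.Connected) (hn : 2 ≤ n)
    {d : ℕ} (hd : d = polyDim (edgePolytope G)) (hd3 : 3 ≤ d)
    (hnb : ∀ z, IsAlt G z → z = 0) (hn1 : n = d + 1) :
    faceCount (edgePolytope G) (d - 1) ≤ 2 ^ d + d := by
  set U1 := {F : Set (Fin n → ℝ) | ∃ v, F = cface G (vvec v)} with hU1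
  set U2 := {F : Set (Fin n → ℝ) | ∃ S : Finset (Fin n), (S.Nonempty ∧
      (∀ i ∈ S, ∀ j ∈ S, ¬G.Adj i j)) ∧ F = cface G (uvec G S)} with hU2
  have hsub : {F : Set (Fin n → ℝ) | IsExposed ℝ (edgePolytope G) F ∧ F.Nonempty ∧
      polyDim F = d - 1} ⊆ U1 ∪ U2 := by
    rintro F ⟨hex, hne, hdim⟩
    rcases classify_nonbip G hconn hn hd hd3 hnb hex hne hdim with h | ⟨S, h1, h2, h3⟩
    · exact Or.inl h
    · exact Or.inr ⟨S, ⟨h1, h2⟩, h3⟩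
  have hfin : (U1 ∪ U2).Finite := (vtype_finite G).union (cut_finite G _)
  have hcount : faceCount (edgePolytope G) (d - 1) ≤ U1.ncard + U2.ncard := by
    calc faceCount (edgePolytope G) (d - 1) ≤ (U1 ∪ U2).ncard :=
          Set.ncard_le_ncard hsub hfin
      _ ≤ U1.ncard + U2.ncard := Set.ncard_union_le _ _
  have h1 : U1.ncard ≤ n := count_vtype G
  have h2 : U2.ncard ≤ 2 ^ (n - 1) - 1 := count_cut_nonbip G hconn hn hnb
  have hpow : 2 ^ (n - 1) = 2 ^ d := by rw [hn1]; simp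
  have hp3 : 1 ≤ 2 ^ d := Nat.one_le_two_pow
  omega
end
end EPAux

/-- Let `G` be a connected graph with at least two vertices whose edge polytope has
dimension `d ≥ 3`.  Then `P(G)` has at most `2^d + d` facets (faces of dimension
`d - 1`). -/
theorem facet_upper_bound {n : ℕ} (G : SimpleGraph (Fin n)) (hn : 2 ≤ n)
    (hconn : G.Connected) (d : ℕ) (hd : d = polyDim (edgePolytope G)) (hd3 : 3 ≤ d) :
    faceCount (edgePolytope G) (d - 1) ≤ 2 ^ d + d := by
  classical
  have hmaster := EPAux.dim_master G hconn hn
  have hdg : d = polyDim (convexHull ℝ (EPAux.gen G)) := hd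
  by_cases hnb : ∀ z, EPAux.IsAlt G z → z = 0
  · -- non-bipartite case
    have hbot : EPAux.altSub G = ⊥ := by
      rw [Submodule.eq_bot_iff]
      intro z hz
      exact hnb z ((EPAux.mem_altSub_iff G z).1 hz)
    have hfr : Module.finrank ℝ (EPAux.altSub G) = 0 := by rw [hbot]; exact finrank_bot ℝ _
    have hn1 : n = d + 1 := by omega
    exact EPAux.final_nonbip G hconn hn hd hd3 hnb hn1
  · -- bipartite case
    push_neg at hnb
    obtain ⟨z0, hz0alt, hz0ne⟩ := hnb
    -- z0 never vanishes
    obtain ⟨k, hk⟩ := Function.ne_iff.1 hz0ne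
    have hk' : z0 k ≠ 0 := by simpa using hk
    have hz0' : ∀ i, z0 i ≠ 0 := by
      intro i
      have habs := EPAux.abs_const_of_alt hconn hz0alt i k
      intro h0
      rw [h0, abs_zero] at habs
      exact hk' (by rw [← abs_eq_zero, ← habs])
    -- finrank altSub = 1
    have hfr : Module.finrank ℝ (EPAux.altSub G) = 1 := by
      have hle := EPAux.finrank_altSub_le G hconn hn
      have hpos : 0 < Module.finrank ℝ (EPAux.altSub G) := by
        rw [Module.finrank_pos_iff]
        exact ⟨⟨z0, (EPAux.mem_altSub_iff G z0).2 hz0alt⟩, 0,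
          fun h => hz0ne (congrArg Subtype.val h)⟩
      omega
    have hn2 : n = d + 2 := by omega
    -- choose the smaller side
    set A0 := Finset.univ.filter (fun i => 0 < z0 i) with hA0
    set B0 := Finset.univ.filter (fun i => z0 i < 0) with hB0
    have hAB : A0.card + B0.card = n := by
      have := Finset.card_filter_add_card_filter_not
        (s := (Finset.univ : Finset (Fin n))) (p := fun i => 0 < z0 i)
      rw [hA0, hB0]
      have hcong : Finset.univ.filter (fun i => ¬ 0 < z0 i) =
          Finset.univ.filter (fun i => z0 i < 0) := by
        apply Finset.filter_congr
        intro i _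
        simp only [not_lt, eq_iff_iff]
        constructor
        · intro h; exact lt_of_le_of_ne h (hz0' i)
        · intro h; exact h.le
      rw [hcong] at this
      rw [this]
      simp
    rcases le_total A0.card B0.card with hle | hle
    · refine EPAux.final_bip G hconn hn hd hd3 hz0alt hz0' ?_ hn2
      have hrfl : Finset.univ.filter (fun i => 0 < z0 i) = A0 := rfl
      rw [hrfl]
      omega
    · -- use -z0
      have hzalt' : EPAux.IsAlt G (-z0) := by
        intro i j hij
        have := hz0alt i j hij
        simp only [Pi.neg_apply]
        linarith
      have hz0'' : ∀ i, (-z0) i ≠ 0 := by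
        intro i
        simp only [Pi.neg_apply, neg_ne_zero]
        exact hz0' i
      have hAeq : Finset.univ.filter (fun i => 0 < (-z0) i) = B0 := by
        rw [hB0]
        apply Finset.filter_congr
        intro i _
        simp only [Pi.neg_apply, eq_iff_iff]
        constructor
        · intro h; linarith
        · intro h; linarith
      apply EPAux.final_bip G hconn hn hd hd3 hzalt' hz0'' _ hn2
      rw [hAeq]
      omega
end
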